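/- arXiv:2506.05945 — 3 statements merged into one kernel-verified Lean document; each statement's English description precedes it below -/
import Mathlib

section
/- The augmented IPW moment is unbiased for the potential outcome CDF for any bounded measurable adjustment function: for any bounded measurable $\mu: \mathcal{S}\times\mathcal{X}\to\mathbb{R}$, under $Y(w)\perp W \mid S$ and $(X \perp W)\mid S$, $\mathbb{E}\left[\frac{\mathbb{1}\{W=w\}(\mathbb{1}\{Y\le y\} - \mu(S,X))}{\pi_w(S)} + \mu(S,X)\right] = F_{Y(w)}(y)$. -/
open MeasureTheory ProbabilityTheory
open scoped ENNReal Classical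

lemma aipw_key {Ω : Type*} [MeasurableSpace Ω] (μ : Measure Ω) [IsFiniteMeasure μ]
    {α : Type*} [MeasurableSpace α] (T : Ω → α) (hT : Measurable T)
    {A B : Set Ω} (hA0 : μ A ≠ 0)
    (hind : ∀ E : Set α, MeasurableSet E → μ (T ⁻¹' E ∩ B) * μ A = μ (T ⁻¹' E ∩ A) * μ B)
    (g : α → ℝ) (hg : Measurable g) :
    ∫ ω in B, g (T ω) ∂μ = (μ B / μ A).toReal * ∫ ω in A, g (T ω) ∂μ := by
  have hAfin : μ A ≠ ⊤ := measure_ne_top μ A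
  have hmap : Measure.map T (μ.restrict B) = (μ B / μ A) • Measure.map T (μ.restrict A) := by
    ext E hE
    rw [Measure.smul_apply, Measure.map_apply hT hE, Measure.map_apply hT hE,
      Measure.restrict_apply (hT hE), Measure.restrict_apply (hT hE), smul_eq_mul]
    have h2 : μ B / μ A * μ (T ⁻¹' E ∩ A) = μ (T ⁻¹' E ∩ A) * μ B / μ A := by
      rw [div_eq_mul_inv, div_eq_mul_inv]; ring
    rw [h2, ENNReal.eq_div_iff hA0 hAfin, mul_comm]
    exact hind E hE
  calc ∫ ω in B, g (T ω) ∂μ = ∫ x, g x ∂(Measure.map T (μ.restrict B)) :=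
        (integral_map hT.aemeasurable hg.aestronglyMeasurable).symm
    _ = (μ B / μ A).toReal • ∫ x, g x ∂(Measure.map T (μ.restrict A)) := by
        rw [hmap, integral_smul_measure]
    _ = (μ B / μ A).toReal * ∫ ω in A, g (T ω) ∂μ := by
        rw [integral_map hT.aemeasurable hg.aestronglyMeasurable, smul_eq_mul]

/-- The augmented IPW moment is unbiased for the potential outcome CDF for any
bounded measurable adjustment function:
`E[ 1{W=w}(1{Y≤y} - μ(S,X))/π_w(S) + μ(S,X) ] = F_{Y(w)}(y)`. -/
theorem aipw_moment_unbiased_for_cdf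
    {Ω : Type*} [MeasurableSpace Ω] (μ : Measure Ω) [IsProbabilityMeasure μ]
    {𝒲 : Type*} [Fintype 𝒲] [MeasurableSpace 𝒲] [MeasurableSingletonClass 𝒲]
    {𝒮 : Type*} [Fintype 𝒮] [MeasurableSpace 𝒮] [MeasurableSingletonClass 𝒮]
    {𝒳 : Type*} [MeasurableSpace 𝒳]
    (Y : 𝒲 → Ω → ℝ) (W : Ω → 𝒲) (S : Ω → 𝒮) (X : Ω → 𝒳)
    (hY : ∀ v, Measurable (Y v)) (hW : Measurable W) (hS : Measurable S) (hX : Measurable X)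
    (hpS : ∀ s : 𝒮, 0 < μ {ω | S ω = s})
    -- joint conditional independence of W and (X, (Y(v))_v) given S:
    (hindep : ∀ (s : 𝒮) (v : 𝒲) (B : Set (𝒳 × (𝒲 → ℝ))), MeasurableSet B →
      μ ({ω | (X ω, fun u => Y u ω) ∈ B} ∩ {ω | W ω = v} ∩ {ω | S ω = s}) * μ {ω | S ω = s}
        = μ ({ω | (X ω, fun u => Y u ω) ∈ B} ∩ {ω | S ω = s})
            * μ ({ω | W ω = v} ∩ {ω | S ω = s}))
    (w : 𝒲) (π : 𝒮 → ℝ)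
    (hπ : ∀ s, π s = ((μ[|{ω | S ω = s}]) {ω | W ω = w}).toReal)
    (hπ01 : ∀ s, 0 < π s ∧ π s < 1)
    (μadj : 𝒮 → 𝒳 → ℝ)
    (hμadj_meas : Measurable (fun p : 𝒮 × 𝒳 => μadj p.1 p.2))
    (hμadj_bdd : ∃ C : ℝ, ∀ s x, |μadj s x| ≤ C) :
    ∀ y : ℝ,
      (∫ ω, ((if W ω = w then
                ((if Y (W ω) ω ≤ y then (1:ℝ) else 0) - μadj (S ω) (X ω)) / π (S ω)
              else 0)
            + μadj (S ω) (X ω)) ∂μ)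
        = (μ {ω | Y w ω ≤ y}).toReal := by
  intro y
  obtain ⟨C, hC⟩ := hμadj_bdd
  set C₀ : ℝ := |C| with hC₀def
  have hC₀ : ∀ s x, |μadj s x| ≤ C₀ := fun s x => (hC s x).trans (le_abs_self C)
  set T : Ω → 𝒳 × (𝒲 → ℝ) := fun ω => (X ω, fun u => Y u ω) with hTdef
  have hT : Measurable T := hX.prodMk (measurable_pi_lambda _ fun u => hY u)
  set A : 𝒮 → Set Ω := fun s => {ω | S ω = s} with hAdef
  have hAm : ∀ s, MeasurableSet (A s) := fun s => hS (measurableSet_singleton s)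
  have hA0 : ∀ s, μ (A s) ≠ 0 := fun s => (hpS s).ne'
  have hWm : MeasurableSet {ω | W ω = w} := hW (measurableSet_singleton w)
  set f1 : Ω → ℝ := fun ω =>
    (if W ω = w then ((if Y (W ω) ω ≤ y then (1:ℝ) else 0) - μadj (S ω) (X ω)) / π (S ω) else 0)
    with hf1def
  set f2 : Ω → ℝ := fun ω => μadj (S ω) (X ω) with hf2def
  set g : 𝒮 → 𝒳 × (𝒲 → ℝ) → ℝ :=
    fun s p => (if p.2 w ≤ y then (1:ℝ) else 0) - μadj s p.1 with hgdef
  set indy : Ω → ℝ := fun ω => if Y w ω ≤ y then (1:ℝ) else 0 with hindydef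
  -- partition / sum facts
  have hsum : ∀ (h : Ω → ℝ) (ω : Ω), (∑ s : 𝒮, (A s).indicator h ω) = h ω := by
    intro h ω
    rw [Finset.sum_eq_single (S ω)]
    · simp [hAdef, Set.indicator_apply]
    · intro s _ hs
      have : ω ∉ A s := by simp [hAdef]; exact Ne.symm hs
      simp [Set.indicator_of_notMem this]
    · simp
  have hpart : ∀ (h : Ω → ℝ), Integrable h μ →
      ∫ ω, h ω ∂μ = ∑ s : 𝒮, ∫ ω in A s, h ω ∂μ := by
    intro h hh
    have e : ∫ ω, h ω ∂μ = ∫ ω, (∑ s : 𝒮, (A s).indicator h ω) ∂μ :=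
      integral_congr_ae (ae_of_all _ fun ω => (hsum h ω).symm)
    rw [e, integral_finset_sum _ (fun s _ => hh.indicator (hAm s))]
    exact Finset.sum_congr rfl fun s _ => integral_indicator (hAm s)
  -- measurability
  have hYW : Measurable fun ω => Y (W ω) ω := by
    have h1 : Measurable (fun p : Ω × 𝒲 => Y p.2 p.1) :=
      measurable_from_prod_countable_left fun v => hY v
    exact h1.comp (measurable_id.prodMk hW)
  have hindymeas : Measurable indy :=
    Measurable.ite (measurableSet_le (hY w) measurable_const) measurable_const measurable_const
  have hf2meas : Measurable f2 := hμadj_meas.comp (hS.prodMk hX)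
  have hπS : Measurable fun ω => π (S ω) := (measurable_of_countable π).comp hS
  have hf1meas : Measurable f1 := by
    apply Measurable.ite hWm _ measurable_const
    exact ((Measurable.ite (measurableSet_le hYW measurable_const) measurable_const
      measurable_const).sub hf2meas).div hπS
  -- integrability
  have hindyint : Integrable indy μ := by
    refine Integrable.mono' (integrable_const 1) hindymeas.aestronglyMeasurable
      (ae_of_all _ fun ω => ?_)
    simp only [hindydef, Real.norm_eq_abs]
    split_ifs <;> simp
  have hf2int : Integrable f2 μ := by
    refine Integrable.mono' (integrable_const C₀) hf2meas.aestronglyMeasurable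
      (ae_of_all _ fun ω => ?_)
    simpa [hf2def] using hC₀ (S ω) (X ω)
  have hf1int : Integrable f1 μ := by
    have : f1 = fun ω => ∑ s : 𝒮, (A s).indicator f1 ω := by
      funext ω; rw [hsum]
    rw [this]
    apply integrable_finset_sum
    intro s _
    refine Integrable.mono' (integrable_const ((1 + C₀) / π s))
      (hf1meas.indicator (hAm s)).aestronglyMeasurable (ae_of_all _ fun ω => ?_)
    rw [Real.norm_eq_abs]
    by_cases hω : ω ∈ A s
    · have hSs : S ω = s := hω
      rw [Set.indicator_of_mem hω]
      simp only [hf1def, hSs]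
      have hC0 : (0:ℝ) ≤ C₀ := abs_nonneg C
      have hπs := (hπ01 s).1
      by_cases hwω : W ω = w
      · rw [if_pos hwω, abs_div, abs_of_pos hπs]
        have habs : |(if Y (W ω) ω ≤ y then (1:ℝ) else 0) - μadj s (X ω)| ≤ 1 + C₀ := by
          rcases abs_le.mp (hC₀ s (X ω)) with ⟨hb1, hb2⟩
          rw [abs_le]; constructor <;> split_ifs <;> linarith
        exact (div_le_div_iff_of_pos_right hπs).mpr habs
      · rw [if_neg hwω, abs_zero]
        exact div_nonneg (by linarith) hπs.le
    · rw [Set.indicator_of_notMem hω, abs_zero]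
      exact div_nonneg (by linarith [abs_nonneg C]) (hπ01 s).1.le
  -- conditional probability formula
  have hπc : ∀ s : 𝒮, (μ ({ω | W ω = w} ∩ A s) / μ (A s)).toReal = π s := by
    intro s
    rw [hπ s, cond_apply (hAm s)]
    rw [Set.inter_comm, div_eq_mul_inv, mul_comm]
  -- key step on each stratum
  have hstep : ∀ s : 𝒮, ∫ ω in A s, f1 ω ∂μ
      = (∫ ω in A s, indy ω ∂μ) - ∫ ω in A s, f2 ω ∂μ := by
    intro s
    have hπs := (hπ01 s).1
    have hgm : Measurable (g s) := by
      apply Measurable.sub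
      · exact Measurable.ite
          (measurableSet_le (measurable_snd.eval) measurable_const)
          measurable_const measurable_const
      · exact hμadj_meas.comp (measurable_const.prodMk measurable_fst)
    have hind' : ∀ E : Set (𝒳 × (𝒲 → ℝ)), MeasurableSet E →
        μ (T ⁻¹' E ∩ ({ω | W ω = w} ∩ A s)) * μ (A s)
          = μ (T ⁻¹' E ∩ A s) * μ ({ω | W ω = w} ∩ A s) := by
      intro E hE
      have h := hindep s w E hE
      rw [Set.inter_assoc] at h
      exact h
    have hkey := aipw_key μ T hT (hA0 s) hind' (g s) hgm
    rw [hπc s] at hkey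
    have e1 : ∫ ω in A s, f1 ω ∂μ
        = ∫ ω in A s, Set.indicator {ω | W ω = w} (fun ω => g s (T ω) / π s) ω ∂μ := by
      apply setIntegral_congr_fun (hAm s)
      intro ω hω
      have hSs : S ω = s := hω
      by_cases hwω : W ω = w
      · simp only [hf1def, hgdef, hTdef, Set.indicator_apply, Set.mem_setOf_eq, hwω, if_true,
          hSs]
      · simp only [hf1def, Set.indicator_apply, Set.mem_setOf_eq, hwω, if_false]
    rw [e1, setIntegral_indicator hWm, integral_div, Set.inter_comm, hkey,
      mul_div_cancel_left₀ _ hπs.ne']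
    have e2 : ∫ ω in A s, g s (T ω) ∂μ = ∫ ω in A s, (indy ω - f2 ω) ∂μ := by
      apply setIntegral_congr_fun (hAm s)
      intro ω hω
      have hSs : S ω = s := hω
      simp only [hgdef, hTdef, hindydef, hf2def, hSs]
    rw [e2]
    exact integral_sub hindyint.restrict hf2int.restrict
  -- assemble
  show (∫ ω, (f1 ω + f2 ω) ∂μ) = (μ {ω | Y w ω ≤ y}).toReal
  rw [integral_add hf1int hf2int, hpart f1 hf1int]
  have e3 : ∑ s : 𝒮, ∫ ω in A s, f1 ω ∂μ
      = (∑ s : 𝒮, ∫ ω in A s, indy ω ∂μ) - ∑ s : 𝒮, ∫ ω in A s, f2 ω ∂μ := by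
    rw [← Finset.sum_sub_distrib]
    exact Finset.sum_congr rfl fun s _ => hstep s
  rw [e3, ← hpart indy hindyint, ← hpart f2 hf2int, sub_add_cancel]
  have e4 : indy = Set.indicator {ω | Y w ω ≤ y} (fun _ => (1:ℝ)) := by
    funext ω
    simp [hindydef, Set.indicator_apply]
  rw [e4, integral_indicator (measurableSet_le (hY w) measurable_const), setIntegral_const,
    smul_eq_mul, mul_one]
  rfl
end

section
/- Conditional variance decomposition of the IPW score: if $Z = \frac{D\, (B - m)}{\pi} + m$ where $D$ is Bernoulli($\pi$) conditional on $(S,X)$ with $0<\pi=\pi(S)<1$, $B$ is a bounded random variable independent of $D$ given $(S,X)$, and $m = \mathbb{E}[B\mid S, X]$, then $\mathbb{E}[Z] = \mathbb{E}[B]$ and $\mathrm{Var}(Z) = \mathbb{E}\left[\frac{1-\pi(S)}{\pi(S)}\,\mathrm{Var}(B\mid S,X)\right] + \mathrm{Var}(B)$. -/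
open MeasureTheory ProbabilityTheory Filter Topology
open scoped ENNReal

lemma aux_mul_condexp {Ω : Type*} [mΩ : MeasurableSpace Ω] [hSB : StandardBorelSpace Ω]
    {μ : Measure Ω} [IsProbabilityMeasure μ]
    {m' : MeasurableSpace Ω} (hm' : m' ≤ mΩ)
    {D G : Ω → ℝ} (hD : @Measurable Ω ℝ mΩ _ D) (hG : @Measurable Ω ℝ mΩ _ G)
    (hD01 : ∀ ω, D ω = 0 ∨ D ω = 1) (hG1 : ∀ ω, ‖G ω‖ ≤ 1)
    (hci : @CondIndepFun Ω m' mΩ hSB hm' ℝ ℝ _ _ D G μ (by infer_instance)) :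
    μ[fun ω => D ω * G ω | m'] =ᵐ[μ] fun ω => (μ[D|m']) ω * (μ[G|m']) ω := by
  classical
  have hDnorm : ∀ ω, ‖D ω‖ ≤ 1 := by
    intro ω; rcases hD01 ω with h | h <;> simp [h]
  have intBdd : ∀ {f : Ω → ℝ}, @AEStronglyMeasurable Ω ℝ _ mΩ mΩ f μ → ∀ C : ℝ,
      (∀ᵐ ω ∂μ, ‖f ω‖ ≤ C) → Integrable f μ := by
    intro f hf C h
    exact (integrable_const C (μ := μ)).mono' hf h
  have hDind : D = Set.indicator (D ⁻¹' {1}) (fun _ => (1:ℝ)) := by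
    funext ω
    rcases hD01 ω with h | h <;> simp [Set.indicator_apply, Set.mem_preimage, h]
  have intD : Integrable D μ :=
    intBdd hD.aestronglyMeasurable 1 (Eventually.of_forall hDnorm)
  have intG : Integrable G μ :=
    intBdd hG.aestronglyMeasurable 1 (Eventually.of_forall hG1)
  -- bound on conditional expectation of D
  have hcd0 : 0 ≤ᵐ[μ] μ[D|m'] :=
    condExp_nonneg (Eventually.of_forall fun ω => by rcases hD01 ω with h | h <;> simp [h])
  have hcd1 : μ[D|m'] ≤ᵐ[μ] fun _ => (1:ℝ) := by
    have h := condExp_mono (μ := μ) (m := m') intD (integrable_const (1:ℝ))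
      (Eventually.of_forall fun ω => by rcases hD01 ω with h | h <;> simp [h])
    have hconst : μ[fun _ : Ω => (1:ℝ)|m'] = fun _ => (1:ℝ) := condExp_const hm' 1
    exact hconst ▸ h
  have hcdb : ∀ᵐ ω ∂μ, ‖(μ[D|m']) ω‖ ≤ 1 := by
    filter_upwards [hcd0, hcd1] with ω h0 h1
    rw [Real.norm_eq_abs, abs_le]
    have h0' : (0:ℝ) ≤ (μ[D|m']) ω := by simpa using h0
    exact ⟨by linarith, h1⟩
  have H := (condIndepFun_iff_condExp_inter_preimage_eq_mul hD hG).mp hci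
  -- Step 2: product with an indicator of a preimage of G
  have key : ∀ t : Set ℝ, MeasurableSet t →
      μ[fun ω => D ω * Set.indicator (G ⁻¹' t) (fun _ => (1:ℝ)) ω | m']
        =ᵐ[μ] fun ω => (μ[D|m']) ω
          * (μ[Set.indicator (G ⁻¹' t) (fun _ => (1:ℝ))|m']) ω := by
    intro t ht
    have h1 : (fun ω => D ω * Set.indicator (G ⁻¹' t) (fun _ => (1:ℝ)) ω)
        = Set.indicator (D ⁻¹' {1} ∩ G ⁻¹' t) (fun _ => (1:ℝ)) := by
      funext ω
      rcases hD01 ω with h | h <;> by_cases h2 : G ω ∈ t <;>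
        simp [Set.indicator_apply, Set.mem_preimage, h, h2]
    have h2 : μ[Set.indicator (D ⁻¹' {1}) (fun _ => (1:ℝ))|m'] = μ[D|m'] := by
      rw [← hDind]
    have h3 := H {1} t (measurableSet_singleton 1) ht
    rw [h1]
    refine h3.trans ?_
    rw [show (μ⟦D ⁻¹' {1}|m'⟧) = μ[D|m'] from h2]
  -- integrability of products with simple funcs
  have intS : ∀ s : SimpleFunc ℝ ℝ, Integrable (fun ω => s (G ω)) μ := by
    intro s
    obtain ⟨C, hC⟩ := s.exists_forall_norm_le
    exact intBdd (s.measurable.comp hG).aestronglyMeasurable C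
      (Eventually.of_forall fun ω => hC _)
  have intDS : ∀ s : SimpleFunc ℝ ℝ, Integrable (fun ω => D ω * s (G ω)) μ := by
    intro s
    obtain ⟨C, hC⟩ := s.exists_forall_norm_le
    refine intBdd (hD.mul (s.measurable.comp hG)).aestronglyMeasurable C
      (Eventually.of_forall fun ω => ?_)
    calc ‖D ω * s (G ω)‖ = ‖D ω‖ * ‖s (G ω)‖ := norm_mul _ _
      _ ≤ 1 * C := by
          refine mul_le_mul (hDnorm ω) (hC _) (norm_nonneg _) zero_le_one
      _ = C := one_mul C
  -- Step 3: product with simple functions of G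
  have step3 : ∀ s : SimpleFunc ℝ ℝ,
      μ[fun ω => D ω * s (G ω) | m']
        =ᵐ[μ] fun ω => (μ[D|m']) ω * (μ[fun ω' => s (G ω')|m']) ω := by
    intro s
    induction s using SimpleFunc.induction with
    | const c ht =>
      rename_i t
      have e1 : (fun ω => D ω * (SimpleFunc.piecewise t ht (SimpleFunc.const ℝ c)
            (SimpleFunc.const ℝ 0)) (G ω))
          = fun ω => c * (D ω * Set.indicator (G ⁻¹' t) (fun _ => (1:ℝ)) ω) := by
        funext ω
        by_cases h2 : G ω ∈ t <;>
          simp [SimpleFunc.piecewise_apply, Set.indicator_apply, Set.mem_preimage, h2] <;> ring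
      have e2 : (fun ω' => (SimpleFunc.piecewise t ht (SimpleFunc.const ℝ c)
            (SimpleFunc.const ℝ 0)) (G ω'))
          = fun ω' => c * Set.indicator (G ⁻¹' t) (fun _ => (1:ℝ)) ω' := by
        funext ω
        by_cases h2 : G ω ∈ t <;>
          simp [SimpleFunc.piecewise_apply, Set.indicator_apply, Set.mem_preimage, h2]
      rw [e1, e2]
      have hs1 : μ[fun ω => c * (D ω * Set.indicator (G ⁻¹' t) (fun _ => (1:ℝ)) ω)|m']
          =ᵐ[μ] fun ω => c * (μ[fun ω' => D ω' * Set.indicator (G ⁻¹' t)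
              (fun _ => (1:ℝ)) ω'|m']) ω :=
        condExp_smul (μ := μ) (m := m') c _
      have hs2 : μ[fun ω' => c * Set.indicator (G ⁻¹' t) (fun _ => (1:ℝ)) ω'|m']
          =ᵐ[μ] fun ω => c * (μ[Set.indicator (G ⁻¹' t) (fun _ => (1:ℝ))|m']) ω :=
        condExp_smul (μ := μ) (m := m') c _
      refine hs1.trans ?_
      filter_upwards [key t ht, hs2] with ω h1 h2
      simp only [h1, h2]
      ring
    | add hdisj hf hg =>
      rename_i f g
      have e1 : (fun ω => D ω * (f + g) (G ω))
          = fun ω => D ω * f (G ω) + D ω * g (G ω) := by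
        funext ω
        simp [SimpleFunc.coe_add, mul_add]
      have e2 : (fun ω' => (f + g) (G ω')) = fun ω' => f (G ω') + g (G ω') := by
        funext ω; simp [SimpleFunc.coe_add]
      rw [e1, e2]
      have h1 := condExp_add (μ := μ) (m := m') (intDS f) (intDS g)
      have h2 := condExp_add (μ := μ) (m := m') (intS f) (intS g)
      have e3 : (fun ω' => f (G ω') + g (G ω'))
          = ((fun ω' => f (G ω')) + fun ω' => g (G ω')) := rfl
      rw [e3]
      refine h1.trans ?_
      filter_upwards [hf, hg, h2] with ω hfω hgω h2ω
      simp only [Pi.add_apply] at *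
      rw [hfω, hgω, h2ω]
      ring
  -- Step 4: approximation
  set fs : ℕ → SimpleFunc ℝ ℝ :=
    fun n => SimpleFunc.approxOn (id : ℝ → ℝ) measurable_id Set.univ 0 (Set.mem_univ 0) n
    with hfs_def
  have htend : ∀ y : ℝ, Tendsto (fun n => fs n y) atTop (𝓝 y) := by
    intro y
    exact SimpleFunc.tendsto_approxOn measurable_id (Set.mem_univ 0) (by simp)
  have hbound : ∀ n y, ‖fs n y‖ ≤ ‖y‖ + ‖y‖ := fun n y =>
    SimpleFunc.norm_approxOn_zero_le measurable_id (Set.mem_univ 0) y n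
  have hGb2 : ∀ n ω, ‖fs n (G ω)‖ ≤ 2 := by
    intro n ω
    calc ‖fs n (G ω)‖ ≤ ‖G ω‖ + ‖G ω‖ := hbound n (G ω)
      _ ≤ 1 + 1 := add_le_add (hG1 ω) (hG1 ω)
      _ = 2 := by norm_num
  have hmain : μ[fun ω => D ω * G ω|m'] =ᵐ[μ] μ[fun ω => (μ[D|m']) ω * G ω|m'] := by
    refine tendsto_condExp_unique (μ := μ) (m := m')
      (fun n ω => D ω * fs n (G ω)) (fun n ω => (μ[D|m']) ω * fs n (G ω))
      (fun ω => D ω * G ω) (fun ω => (μ[D|m']) ω * G ω)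
      (fun n => intDS (fs n)) ?_ ?_ ?_ (fun _ => (2:ℝ)) (integrable_const 2)
      (fun _ => (2:ℝ)) (integrable_const 2) ?_ ?_ ?_
    · intro n
      refine intBdd
        (((stronglyMeasurable_condExp.mono hm').aestronglyMeasurable).mul
          ((fs n).measurable.comp hG).aestronglyMeasurable) 2 ?_
      filter_upwards [hcdb] with ω hω
      calc ‖(μ[D|m']) ω * fs n (G ω)‖ = ‖(μ[D|m']) ω‖ * ‖fs n (G ω)‖ := norm_mul _ _
        _ ≤ 1 * 2 := mul_le_mul hω (hGb2 n ω) (norm_nonneg _) zero_le_one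
        _ = 2 := one_mul 2
    · exact Eventually.of_forall fun ω => (htend (G ω)).const_mul _
    · exact Eventually.of_forall fun ω => (htend (G ω)).const_mul _
    · intro n
      refine Eventually.of_forall fun ω => ?_
      calc ‖D ω * fs n (G ω)‖ = ‖D ω‖ * ‖fs n (G ω)‖ := norm_mul _ _
        _ ≤ 1 * 2 := mul_le_mul (hDnorm ω) (hGb2 n ω) (norm_nonneg _) zero_le_one
        _ = 2 := one_mul 2
    · intro n
      filter_upwards [hcdb] with ω hω
      calc ‖(μ[D|m']) ω * fs n (G ω)‖ = ‖(μ[D|m']) ω‖ * ‖fs n (G ω)‖ := norm_mul _ _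
        _ ≤ 1 * 2 := mul_le_mul hω (hGb2 n ω) (norm_nonneg _) zero_le_one
        _ = 2 := one_mul 2
    · intro n
      refine (step3 (fs n)).trans ?_
      have h := condExp_stronglyMeasurable_mul_of_bound hm' stronglyMeasurable_condExp
        (intS (fs n)) 1 hcdb
      exact (h.symm)
  refine hmain.trans ?_
  exact condExp_stronglyMeasurable_mul_of_bound hm' stronglyMeasurable_condExp intG 1 hcdb
/-- Conditional variance decomposition of the IPW score: if
`Z = D(B - m)/π(S) + m` with `D` conditionally Bernoulli(`π(S)`) given `(S,X)`,
`B ∈ [0,1]` conditionally independent of `D` given `(S,X)` and `m = E[B | S,X]`, then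
`E[Z] = E[B]` and `Var(Z) = E[(1-π(S))/π(S) · Var(B | S,X)] + Var(B)`. -/
theorem ipw_score_conditional_variance_decomposition
    {Ω : Type*} [mΩ : MeasurableSpace Ω] [hSB : StandardBorelSpace Ω] [Nonempty Ω]
    (μ : Measure Ω) [hμ : IsProbabilityMeasure μ]
    {𝒮 : Type*} [Fintype 𝒮] [MeasurableSpace 𝒮] [MeasurableSingletonClass 𝒮]
    {𝒳 : Type*} [MeasurableSpace 𝒳]
    (S : Ω → 𝒮) (X : Ω → 𝒳) (hS : Measurable S) (hX : Measurable X)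
    (𝔪 : MeasurableSpace Ω)
    (h𝔪 : 𝔪 = MeasurableSpace.comap (fun ω => (S ω, X ω)) inferInstance)
    (h𝔪le : 𝔪 ≤ mΩ)
    (D B : Ω → ℝ) (hD : @Measurable Ω ℝ mΩ _ D) (hB : @Measurable Ω ℝ mΩ _ B)
    (hD01 : ∀ ω, D ω = 0 ∨ D ω = 1) (hB01 : ∀ ω, B ω ∈ Set.Icc (0:ℝ) 1)
    (π : 𝒮 → ℝ) (hπ01 : ∀ s, 0 < π s ∧ π s < 1)
    -- D is Bernoulli(π(S)) conditionally on (S, X):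
    (hbern : μ[D | 𝔪] =ᵐ[μ] fun ω => π (S ω))
    -- D and B are conditionally independent given (S, X):
    (hci : @CondIndepFun Ω 𝔪 mΩ hSB h𝔪le ℝ ℝ _ _ D B μ (by infer_instance))
    (m Z : Ω → ℝ)
    (hm : m = μ[B | 𝔪])
    (hZ : ∀ ω, Z ω = D ω * (B ω - m ω) / π (S ω) + m ω) :
    (∫ ω, Z ω ∂μ) = (∫ ω, B ω ∂μ)
      ∧ variance Z μ
          = (∫ ω, ((1 - π (S ω)) / π (S ω))
                * ((μ[fun ω' => (B ω') ^ 2 | 𝔪]) ω - (m ω) ^ 2) ∂μ)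
            + variance B μ := by
  classical
  -- basic facts about π ∘ S
  have hNS : Nonempty 𝒮 := ⟨S (Classical.arbitrary Ω)⟩
  obtain ⟨ε, hε0, hεle⟩ : ∃ ε : ℝ, 0 < ε ∧ ∀ s : 𝒮, ε ≤ π s := by
    refine ⟨Finset.univ.inf' Finset.univ_nonempty π, ?_, ?_⟩
    · exact (Finset.lt_inf'_iff _).mpr fun s _ => (hπ01 s).1
    · exact fun s => Finset.inf'_le π (Finset.mem_univ s)
  have hp_pos : ∀ ω, 0 < π (S ω) := fun ω => (hπ01 _).1
  have hp_ne : ∀ ω, π (S ω) ≠ 0 := fun ω => ne_of_gt (hp_pos ω)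
  have hp_le1 : ∀ ω, π (S ω) ≤ 1 := fun ω => le_of_lt (hπ01 _).2
  have hp_ge : ∀ ω, ε ≤ π (S ω) := fun ω => hεle (S ω)
  -- measurability of π ∘ S with respect to 𝔪
  have hSX : @Measurable Ω (𝒮 × 𝒳) 𝔪 _ (fun ω => (S ω, X ω)) := by
    rw [h𝔪]; exact Measurable.of_comap_le le_rfl
  have hS𝔪 : @Measurable Ω 𝒮 𝔪 _ S := measurable_fst.comp hSX
  have hp𝔪 : @Measurable Ω ℝ 𝔪 _ (fun ω => π (S ω)) :=
    (measurable_of_countable π).comp hS𝔪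
  have hpsm : StronglyMeasurable[𝔪] (fun ω => π (S ω)) := hp𝔪.stronglyMeasurable
  have hpM : @Measurable Ω ℝ mΩ _ (fun ω => π (S ω)) := hp𝔪.mono h𝔪le le_rfl
  -- measurability and bounds for the various functions
  have hmsm : StronglyMeasurable[𝔪] m := hm ▸ stronglyMeasurable_condExp
  have hmM : @Measurable Ω ℝ mΩ _ m := ((hmsm.mono h𝔪le).measurable)
  set Q : Ω → ℝ := μ[fun ω' => (B ω') ^ 2|𝔪] with hQdef
  have hQsm : StronglyMeasurable[𝔪] Q := stronglyMeasurable_condExp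
  have hQM : @Measurable Ω ℝ mΩ _ Q := (hQsm.mono h𝔪le).measurable
  have hDn : ∀ ω, ‖D ω‖ ≤ 1 := by
    intro ω; rcases hD01 ω with h | h <;> simp [h]
  have hBn : ∀ ω, ‖B ω‖ ≤ 1 := by
    intro ω
    rw [Real.norm_eq_abs, abs_le]
    exact ⟨by linarith [(hB01 ω).1], (hB01 ω).2⟩
  have hB2n : ∀ ω, ‖B ω ^ 2‖ ≤ 1 := by
    intro ω
    rw [Real.norm_eq_abs, abs_le]
    constructor
    · nlinarith [(hB01 ω).1, (hB01 ω).2]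
    · nlinarith [(hB01 ω).1, (hB01 ω).2]
  -- integrability helper
  have intBdd : ∀ {f : Ω → ℝ}, @AEStronglyMeasurable Ω ℝ _ mΩ mΩ f μ → ∀ C : ℝ,
      (∀ᵐ ω ∂μ, ‖f ω‖ ≤ C) → Integrable f μ := by
    intro f hf C h
    exact (integrable_const C (μ := μ)).mono' hf h
  have intD : Integrable D μ := intBdd hD.aestronglyMeasurable 1 (.of_forall hDn)
  have intB : Integrable B μ := intBdd hB.aestronglyMeasurable 1 (.of_forall hBn)
  have intBsq : Integrable (fun ω => B ω ^ 2) μ :=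
    intBdd (hB.pow_const 2).aestronglyMeasurable 1 (.of_forall hB2n)
  -- a.e. bounds on conditional expectations
  have hmIcc : ∀ᵐ ω ∂μ, m ω ∈ Set.Icc (0:ℝ) 1 := by
    have h0 : (0:Ω → ℝ) ≤ᵐ[μ] μ[B|𝔪] :=
      condExp_nonneg (Eventually.of_forall fun ω => (hB01 ω).1)
    have h1 : μ[B|𝔪] ≤ᵐ[μ] μ[fun _ : Ω => (1:ℝ)|𝔪] :=
      condExp_mono intB (integrable_const 1) (Eventually.of_forall fun ω => (hB01 ω).2)
    have hconst : μ[fun _ : Ω => (1:ℝ)|𝔪] = fun _ => (1:ℝ) := condExp_const h𝔪le 1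
    rw [hconst] at h1
    rw [hm]
    filter_upwards [h0, h1] with ω hω0 hω1
    exact ⟨by simpa using hω0, hω1⟩
  have hQIcc : ∀ᵐ ω ∂μ, Q ω ∈ Set.Icc (0:ℝ) 1 := by
    have h0 : (0:Ω → ℝ) ≤ᵐ[μ] Q :=
      condExp_nonneg (Eventually.of_forall fun ω => sq_nonneg (B ω))
    have h1 : Q ≤ᵐ[μ] μ[fun _ : Ω => (1:ℝ)|𝔪] :=
      condExp_mono intBsq (integrable_const 1) (Eventually.of_forall fun ω => by
        have := hB2n ω; rw [Real.norm_eq_abs, abs_le] at this; exact this.2)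
    have hconst : μ[fun _ : Ω => (1:ℝ)|𝔪] = fun _ => (1:ℝ) := condExp_const h𝔪le 1
    rw [hconst] at h1
    filter_upwards [h0, h1] with ω hω0 hω1
    exact ⟨by simpa using hω0, hω1⟩
  have hmn : ∀ᵐ ω ∂μ, ‖m ω‖ ≤ 1 := by
    filter_upwards [hmIcc] with ω hω
    rw [Real.norm_eq_abs, abs_le]; exact ⟨by linarith [hω.1], hω.2⟩
  have hQn : ∀ᵐ ω ∂μ, ‖Q ω‖ ≤ 1 := by
    filter_upwards [hQIcc] with ω hω
    rw [Real.norm_eq_abs, abs_le]; exact ⟨by linarith [hω.1], hω.2⟩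
  -- more integrable functions
  have intDB : Integrable (fun ω => D ω * B ω) μ := by
    refine intBdd (hD.mul hB).aestronglyMeasurable 1 (.of_forall fun ω => ?_)
    calc ‖D ω * B ω‖ = ‖D ω‖ * ‖B ω‖ := norm_mul _ _
      _ ≤ 1 * 1 := mul_le_mul (hDn ω) (hBn ω) (norm_nonneg _) zero_le_one
      _ = 1 := one_mul 1
  have intDB2 : Integrable (fun ω => D ω * B ω ^ 2) μ := by
    refine intBdd (hD.mul (hB.pow_const 2)).aestronglyMeasurable 1 (.of_forall fun ω => ?_)
    calc ‖D ω * B ω ^ 2‖ = ‖D ω‖ * ‖B ω ^ 2‖ := norm_mul _ _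
      _ ≤ 1 * 1 := mul_le_mul (hDn ω) (hB2n ω) (norm_nonneg _) zero_le_one
      _ = 1 := one_mul 1
  have intmD : Integrable (fun ω => m ω * D ω) μ := by
    refine intBdd (hmM.mul hD).aestronglyMeasurable 1 ?_
    filter_upwards [hmn] with ω hω
    calc ‖m ω * D ω‖ = ‖m ω‖ * ‖D ω‖ := norm_mul _ _
      _ ≤ 1 * 1 := mul_le_mul hω (hDn ω) (norm_nonneg _) zero_le_one
      _ = 1 := one_mul 1
  have int2mDB : Integrable (fun ω => 2 * m ω * (D ω * B ω)) μ := by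
    refine intBdd ((measurable_const.mul hmM).mul (hD.mul hB)).aestronglyMeasurable 2 ?_
    filter_upwards [hmn] with ω hω
    calc ‖2 * m ω * (D ω * B ω)‖ = ‖2 * m ω‖ * ‖D ω * B ω‖ := norm_mul _ _
      _ ≤ 2 * 1 := by
          refine mul_le_mul ?_ ?_ (norm_nonneg _) (by norm_num)
          · calc ‖2 * m ω‖ = ‖(2:ℝ)‖ * ‖m ω‖ := norm_mul _ _
              _ ≤ 2 * 1 := by
                  refine mul_le_mul (by norm_num) hω (norm_nonneg _) (by norm_num)
              _ = 2 := by norm_num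
          · calc ‖D ω * B ω‖ = ‖D ω‖ * ‖B ω‖ := norm_mul _ _
              _ ≤ 1 * 1 := mul_le_mul (hDn ω) (hBn ω) (norm_nonneg _) zero_le_one
              _ = 1 := one_mul 1
      _ = 2 := by norm_num
  have intm2D : Integrable (fun ω => m ω ^ 2 * D ω) μ := by
    refine intBdd ((hmM.pow_const 2).mul hD).aestronglyMeasurable 1 ?_
    filter_upwards [hmn] with ω hω
    calc ‖m ω ^ 2 * D ω‖ = ‖m ω ^ 2‖ * ‖D ω‖ := norm_mul _ _
      _ ≤ 1 * 1 := by
          refine mul_le_mul ?_ (hDn ω) (norm_nonneg _) zero_le_one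
          rw [norm_pow]
          exact pow_le_one₀ (norm_nonneg _) hω
      _ = 1 := one_mul 1
  have intmsq : Integrable (fun ω => m ω ^ 2) μ := by
    refine intBdd (hmM.pow_const 2).aestronglyMeasurable 1 ?_
    filter_upwards [hmn] with ω hω
    rw [norm_pow]
    exact pow_le_one₀ (norm_nonneg _) hω
  -- pull-out helper
  have pull : ∀ (f g : Ω → ℝ), StronglyMeasurable[𝔪] f → Integrable g μ → ∀ C : ℝ,
      (∀ᵐ ω ∂μ, ‖f ω‖ ≤ C) →
      μ[fun ω => f ω * g ω|𝔪] =ᵐ[μ] fun ω => f ω * (μ[g|𝔪]) ω := by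
    intro f g hf hg C hC
    exact condExp_stronglyMeasurable_mul_of_bound h𝔪le hf hg C hC
  -- key conditional expectation computations
  have cDB : μ[fun ω => D ω * B ω|𝔪] =ᵐ[μ] fun ω => π (S ω) * m ω := by
    have h1 := aux_mul_condexp (mΩ := mΩ) h𝔪le hD hB hD01 hBn hci
    filter_upwards [h1, hbern] with ω h1ω h2ω
    rw [h1ω, h2ω, ← hm]
  have cDB2 : μ[fun ω => D ω * B ω ^ 2|𝔪] =ᵐ[μ] fun ω => π (S ω) * Q ω := by
    have hci2 : @CondIndepFun Ω 𝔪 mΩ hSB h𝔪le ℝ ℝ _ _ D (fun ω => B ω ^ 2) μ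
        (by infer_instance) := hci.comp measurable_id (measurable_id.pow_const 2)
    have h1 := aux_mul_condexp (mΩ := mΩ) h𝔪le hD (hB.pow_const 2) hD01 hB2n hci2
    filter_upwards [h1, hbern] with ω h1ω h2ω
    rw [h1ω, h2ω, hQdef]
  have cmD : μ[fun ω => m ω * D ω|𝔪] =ᵐ[μ] fun ω => m ω * π (S ω) := by
    have h1 := pull m D hmsm intD 1 hmn
    filter_upwards [h1, hbern] with ω h1ω h2ω
    rw [h1ω, h2ω]
  have cV : μ[fun ω => D ω * B ω - m ω * D ω|𝔪] =ᵐ[μ] fun _ => (0:ℝ) := by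
    have e : (fun ω => D ω * B ω - m ω * D ω)
        = ((fun ω => D ω * B ω) - fun ω => m ω * D ω) := rfl
    rw [e]
    have h1 := condExp_sub (μ := μ) (m := 𝔪) intDB intmD
    refine h1.trans ?_
    filter_upwards [cDB, cmD] with ω h1ω h2ω
    simp only [Pi.sub_apply, h1ω, h2ω]
    ring
  -- PART 1 : expectation
  have hZW : Z = fun ω => (1 / π (S ω)) * (D ω * B ω - m ω * D ω) + m ω := by
    funext ω
    rw [hZ ω]
    ring
  have hp_inv_n : ∀ ω, ‖1 / π (S ω)‖ ≤ 1 / ε := by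
    intro ω
    rw [Real.norm_eq_abs, abs_of_pos (one_div_pos.mpr (hp_pos ω))]
    exact div_le_div₀ (by norm_num) le_rfl hε0 (hp_ge ω)
  have intV : Integrable (fun ω => D ω * B ω - m ω * D ω) μ := intDB.sub intmD
  have cW : μ[fun ω => (1 / π (S ω)) * (D ω * B ω - m ω * D ω)|𝔪] =ᵐ[μ] fun _ => (0:ℝ) := by
    have h1 := pull (fun ω => 1 / π (S ω)) (fun ω => D ω * B ω - m ω * D ω)
      (measurable_const.div hp𝔪).stronglyMeasurable intV (1/ε) (.of_forall hp_inv_n)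
    refine h1.trans ?_
    filter_upwards [cV] with ω hω
    rw [hω]
    ring
  have intW : Integrable (fun ω => (1 / π (S ω)) * (D ω * B ω - m ω * D ω)) μ := by
    refine intBdd ((measurable_const.div hpM).mul (((hD.mul hB).sub
      (hmM.mul hD)))).aestronglyMeasurable ((1/ε) * 2) ?_
    filter_upwards [hmn] with ω hω
    calc ‖(1 / π (S ω)) * (D ω * B ω - m ω * D ω)‖
        = ‖1 / π (S ω)‖ * ‖D ω * B ω - m ω * D ω‖ := norm_mul _ _
      _ ≤ (1/ε) * 2 := by
          refine mul_le_mul (hp_inv_n ω) ?_ (norm_nonneg _)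
            (le_of_lt (one_div_pos.mpr hε0))
          calc ‖D ω * B ω - m ω * D ω‖ ≤ ‖D ω * B ω‖ + ‖m ω * D ω‖ := norm_sub_le _ _
            _ ≤ 1 * 1 + 1 * 1 := by
                refine add_le_add ?_ ?_
                · rw [norm_mul]
                  exact mul_le_mul (hDn ω) (hBn ω) (norm_nonneg _) zero_le_one
                · rw [norm_mul]
                  exact mul_le_mul hω (hDn ω) (norm_nonneg _) zero_le_one
            _ = 2 := by norm_num
  have intm : Integrable m μ := intBdd hmM.aestronglyMeasurable 1 hmn
  have part1 : (∫ ω, Z ω ∂μ) = ∫ ω, B ω ∂μ := by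
    rw [hZW]
    rw [integral_add intW intm]
    have h1 : ∫ ω, (1 / π (S ω)) * (D ω * B ω - m ω * D ω) ∂μ = 0 := by
      rw [← integral_condExp (μ := μ) h𝔪le (f := fun ω => (1 / π (S ω)) * (D ω * B ω - m ω * D ω)), integral_congr_ae cW, integral_zero]
    have h2 : ∫ ω, m ω ∂μ = ∫ ω, B ω ∂μ := by
      rw [hm]
      exact integral_condExp h𝔪le
    rw [h1, h2, zero_add]
  refine ⟨part1, ?_⟩
  -- PART 2 : variance
  have hZM : @Measurable Ω ℝ mΩ _ Z := by
    have : Z = fun ω => D ω * (B ω - m ω) / π (S ω) + m ω := funext hZ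
    rw [this]
    exact ((hD.mul (hB.sub hmM)).div hpM).add hmM
  have hZn : ∀ᵐ ω ∂μ, ‖Z ω‖ ≤ 1/ε + 1 := by
    filter_upwards [hmIcc] with ω hω
    rw [hZ ω]
    calc ‖D ω * (B ω - m ω) / π (S ω) + m ω‖
        ≤ ‖D ω * (B ω - m ω) / π (S ω)‖ + ‖m ω‖ := norm_add_le _ _
      _ ≤ 1/ε + 1 := by
          refine add_le_add ?_ ?_
          · rw [norm_div, Real.norm_eq_abs (π (S ω)), abs_of_pos (hp_pos ω)]
            refine div_le_div₀ (by norm_num) ?_ hε0 (hp_ge ω)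
            rw [norm_mul]
            calc ‖D ω‖ * ‖B ω - m ω‖ ≤ 1 * 1 := by
                  refine mul_le_mul (hDn ω) ?_ (norm_nonneg _) zero_le_one
                  rw [Real.norm_eq_abs, abs_le]
                  constructor
                  · linarith [(hB01 ω).1, hω.2]
                  · linarith [(hB01 ω).2, hω.1]
              _ = 1 := one_mul 1
          · rw [Real.norm_eq_abs, abs_le]
            exact ⟨by linarith [hω.1], hω.2⟩
  have hZL2 : MemLp Z 2 μ := MemLp.of_bound hZM.aestronglyMeasurable _ hZn
  have hBL2 : MemLp B 2 μ := MemLp.of_bound hB.aestronglyMeasurable 1 (.of_forall hBn)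
  have intZsq : Integrable (fun ω => Z ω ^ 2) μ := by
    refine intBdd (hZM.pow_const 2).aestronglyMeasurable ((1/ε + 1)^2) ?_
    filter_upwards [hZn] with ω hω
    rw [norm_pow]
    exact pow_le_pow_left₀ (norm_nonneg _) hω 2
  -- conditional expectation of U
  have cU : μ[fun ω => D ω * B ω ^ 2 - 2 * m ω * (D ω * B ω) + m ω ^ 2 * D ω|𝔪]
      =ᵐ[μ] fun ω => π (S ω) * (Q ω - m ω ^ 2) := by
    have e : (fun ω => D ω * B ω ^ 2 - 2 * m ω * (D ω * B ω) + m ω ^ 2 * D ω)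
        = (((fun ω => D ω * B ω ^ 2) - fun ω => 2 * m ω * (D ω * B ω))
            + fun ω => m ω ^ 2 * D ω) := rfl
    rw [e]
    have h1 := condExp_add (μ := μ) (m := 𝔪) (intDB2.sub int2mDB) intm2D
    refine h1.trans ?_
    have h2 := condExp_sub (μ := μ) (m := 𝔪) intDB2 int2mDB
    have c2m : μ[fun ω => 2 * m ω * (D ω * B ω)|𝔪]
        =ᵐ[μ] fun ω => 2 * m ω * ((μ[fun ω' => D ω' * B ω'|𝔪]) ω) := by
      refine pull (fun ω => 2 * m ω) (fun ω => D ω * B ω)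
        (stronglyMeasurable_const.mul hmsm) intDB 2 ?_
      filter_upwards [hmn] with ω hω
      calc ‖2 * m ω‖ = ‖(2:ℝ)‖ * ‖m ω‖ := norm_mul _ _
        _ ≤ 2 * 1 := mul_le_mul (by norm_num) hω (norm_nonneg _) (by norm_num)
        _ = 2 := by norm_num
    have cm2 : μ[fun ω => m ω ^ 2 * D ω|𝔪] =ᵐ[μ] fun ω => m ω ^ 2 * ((μ[D|𝔪]) ω) := by
      refine pull (fun ω => m ω ^ 2) D (by
        have : (fun ω => m ω ^ 2) = fun ω => m ω * m ω := by funext ω; ring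
        rw [this]; exact hmsm.mul hmsm) intD 1 ?_
      filter_upwards [hmn] with ω hω
      rw [norm_pow]
      exact pow_le_one₀ (norm_nonneg _) hω
    filter_upwards [h2, cDB2, c2m, cm2, cDB, hbern, hmIcc] with ω hω2 hωDB2 hω2m hωm2 hωDB hωb hωm
    simp only [Pi.add_apply, Pi.sub_apply] at *
    rw [hω2, hωDB2, hω2m, hωm2, hωDB, hωb]
    ring
  -- conditional expectation of Z²
  have cZsq : μ[fun ω => Z ω ^ 2|𝔪]
      =ᵐ[μ] fun ω => (1 / π (S ω)) * (Q ω - m ω ^ 2) + m ω ^ 2 := by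
    have hZsqA : ∀ ω, Z ω ^ 2
        = (1 / π (S ω) ^ 2) * (D ω * B ω ^ 2 - 2 * m ω * (D ω * B ω) + m ω ^ 2 * D ω)
          + (2 * m ω / π (S ω)) * (D ω * B ω - m ω * D ω) + m ω ^ 2 := by
      intro ω
      rw [hZ ω]
      rcases hD01 ω with h | h <;> rw [h] <;> field_simp [hp_ne ω] <;> ring
    have intU : Integrable (fun ω =>
        D ω * B ω ^ 2 - 2 * m ω * (D ω * B ω) + m ω ^ 2 * D ω) μ :=
      (intDB2.sub int2mDB).add intm2D
    have intF1 : Integrable (fun ω => (1 / π (S ω) ^ 2)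
        * (D ω * B ω ^ 2 - 2 * m ω * (D ω * B ω) + m ω ^ 2 * D ω)) μ := by
      refine intBdd ((measurable_const.div (hpM.pow_const 2)).mul
        (((hD.mul (hB.pow_const 2)).sub ((measurable_const.mul hmM).mul (hD.mul hB))).add
          ((hmM.pow_const 2).mul hD))).aestronglyMeasurable ((1/ε^2) * 4) ?_
      filter_upwards [hmn] with ω hω
      rw [norm_mul]
      refine mul_le_mul ?_ ?_ (norm_nonneg _)
        (le_of_lt (one_div_pos.mpr (pow_pos hε0 2)))
      · rw [norm_div, Real.norm_eq_abs (π (S ω) ^ 2), abs_of_pos (pow_pos (hp_pos ω) 2)]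
        refine div_le_div₀ (by norm_num) (by norm_num) (pow_pos hε0 2) ?_
        exact pow_le_pow_left₀ (le_of_lt hε0) (hp_ge ω) 2
      · calc ‖D ω * B ω ^ 2 - 2 * m ω * (D ω * B ω) + m ω ^ 2 * D ω‖
            ≤ ‖D ω * B ω ^ 2 - 2 * m ω * (D ω * B ω)‖ + ‖m ω ^ 2 * D ω‖ := norm_add_le _ _
          _ ≤ (‖D ω * B ω ^ 2‖ + ‖2 * m ω * (D ω * B ω)‖) + ‖m ω ^ 2 * D ω‖ := by
              gcongr
              exact norm_sub_le _ _
          _ ≤ (1 + 2) + 1 := by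
              have e1 : ‖D ω * B ω ^ 2‖ ≤ 1 := by
                rw [norm_mul]
                calc ‖D ω‖ * ‖B ω ^ 2‖ ≤ 1 * 1 :=
                      mul_le_mul (hDn ω) (hB2n ω) (norm_nonneg _) zero_le_one
                  _ = 1 := one_mul 1
              have e2 : ‖2 * m ω * (D ω * B ω)‖ ≤ 2 := by
                have h2m : ‖2 * m ω‖ ≤ 2 := by
                  rw [norm_mul]
                  calc ‖(2:ℝ)‖ * ‖m ω‖ ≤ 2 * 1 :=
                        mul_le_mul (by norm_num) hω (norm_nonneg _) (by norm_num)
                    _ = 2 := by norm_num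
                have hDB' : ‖D ω * B ω‖ ≤ 1 := by
                  rw [norm_mul]
                  exact (mul_le_mul (hDn ω) (hBn ω) (norm_nonneg _) zero_le_one).trans
                    (by norm_num)
                rw [norm_mul]
                calc ‖2 * m ω‖ * ‖D ω * B ω‖ ≤ 2 * 1 :=
                      mul_le_mul h2m hDB' (norm_nonneg _) (by norm_num)
                  _ = 2 := by norm_num
              have e3 : ‖m ω ^ 2 * D ω‖ ≤ 1 := by
                rw [norm_mul, norm_pow]
                calc ‖m ω‖ ^ 2 * ‖D ω‖ ≤ 1 * 1 := by
                      refine mul_le_mul ?_ (hDn ω) (norm_nonneg _) zero_le_one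
                      exact pow_le_one₀ (norm_nonneg _) hω
                  _ = 1 := one_mul 1
              gcongr
          _ = 4 := by norm_num
    have intF2 : Integrable (fun ω => (2 * m ω / π (S ω)) * (D ω * B ω - m ω * D ω)) μ := by
      refine intBdd (((measurable_const.mul hmM).div hpM).mul
        ((hD.mul hB).sub (hmM.mul hD))).aestronglyMeasurable ((2/ε) * 2) ?_
      filter_upwards [hmn] with ω hω
      rw [norm_mul]
      refine mul_le_mul ?_ ?_ (norm_nonneg _)
        (le_of_lt (div_pos (by norm_num) hε0))
      · rw [norm_div, Real.norm_eq_abs (π (S ω)), abs_of_pos (hp_pos ω)]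
        refine div_le_div₀ (by norm_num) ?_ hε0 (hp_ge ω)
        calc ‖2 * m ω‖ = ‖(2:ℝ)‖ * ‖m ω‖ := norm_mul _ _
          _ ≤ 2 * 1 := mul_le_mul (by norm_num) hω (norm_nonneg _) (by norm_num)
          _ = 2 := by norm_num
      · calc ‖D ω * B ω - m ω * D ω‖ ≤ ‖D ω * B ω‖ + ‖m ω * D ω‖ := norm_sub_le _ _
          _ ≤ 1 * 1 + 1 * 1 := by
              refine add_le_add ?_ ?_
              · rw [norm_mul]
                exact mul_le_mul (hDn ω) (hBn ω) (norm_nonneg _) zero_le_one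
              · rw [norm_mul]
                exact mul_le_mul hω (hDn ω) (norm_nonneg _) zero_le_one
          _ = 2 := by norm_num
    have e : (fun ω => Z ω ^ 2)
        = (((fun ω => (1 / π (S ω) ^ 2)
              * (D ω * B ω ^ 2 - 2 * m ω * (D ω * B ω) + m ω ^ 2 * D ω))
            + fun ω => (2 * m ω / π (S ω)) * (D ω * B ω - m ω * D ω))
          + fun ω => m ω ^ 2) := by
      funext ω
      exact hZsqA ω
    rw [e]
    have h1 := condExp_add (μ := μ) (m := 𝔪) (intF1.add intF2) intmsq
    refine h1.trans ?_
    have h2 := condExp_add (μ := μ) (m := 𝔪) intF1 intF2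
    have cF1 : μ[fun ω => (1 / π (S ω) ^ 2)
        * (D ω * B ω ^ 2 - 2 * m ω * (D ω * B ω) + m ω ^ 2 * D ω)|𝔪]
        =ᵐ[μ] fun ω => (1 / π (S ω) ^ 2)
          * ((μ[fun ω' => D ω' * B ω' ^ 2 - 2 * m ω' * (D ω' * B ω') + m ω' ^ 2 * D ω'|𝔪]) ω) := by
      refine pull _ _ (measurable_const.div (hp𝔪.pow_const 2)).stronglyMeasurable intU
        (1/ε^2) (.of_forall fun ω => ?_)
      rw [norm_div, Real.norm_eq_abs (π (S ω) ^ 2), abs_of_pos (pow_pos (hp_pos ω) 2)]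
      refine div_le_div₀ (by norm_num) (by norm_num) (pow_pos hε0 2) ?_
      exact pow_le_pow_left₀ (le_of_lt hε0) (hp_ge ω) 2
    have cF2 : μ[fun ω => (2 * m ω / π (S ω)) * (D ω * B ω - m ω * D ω)|𝔪]
        =ᵐ[μ] fun ω => (2 * m ω / π (S ω))
          * ((μ[fun ω' => D ω' * B ω' - m ω' * D ω'|𝔪]) ω) := by
      refine pull _ _ ((measurable_const.mul hmsm.measurable).div hp𝔪).stronglyMeasurable intV (2/ε) ?_
      filter_upwards [hmn] with ω hω
      rw [norm_div, Real.norm_eq_abs (π (S ω)), abs_of_pos (hp_pos ω)]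
      refine div_le_div₀ (by norm_num) ?_ hε0 (hp_ge ω)
      calc ‖2 * m ω‖ = ‖(2:ℝ)‖ * ‖m ω‖ := norm_mul _ _
        _ ≤ 2 * 1 := mul_le_mul (by norm_num) hω (norm_nonneg _) (by norm_num)
        _ = 2 := by norm_num
    have cF3 : μ[fun ω => m ω ^ 2|𝔪] = fun ω => m ω ^ 2 := by
      refine condExp_of_stronglyMeasurable h𝔪le ?_ intmsq
      have : (fun ω => m ω ^ 2) = fun ω => m ω * m ω := by funext ω; ring
      rw [this]; exact hmsm.mul hmsm
    filter_upwards [h2, cF1, cF2, cU, cV] with ω hω2 hω3 hω4 hω5 hω6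
    simp only [Pi.add_apply] at *
    rw [hω2, hω3, hω4, hω5, hω6, cF3]
    have hπ := hp_ne ω
    field_simp
    ring
  -- computing the integrals
  have intQ : Integrable Q μ := intBdd hQM.aestronglyMeasurable 1 hQn
  have intQm : Integrable (fun ω => Q ω - m ω ^ 2) μ := intQ.sub intmsq
  have int1p : Integrable (fun ω => (1 / π (S ω)) * (Q ω - m ω ^ 2)) μ := by
    refine intBdd ((measurable_const.div hpM).mul (hQM.sub
      (hmM.pow_const 2))).aestronglyMeasurable ((1/ε) * 2) ?_
    filter_upwards [hmn, hQn] with ω hω hq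
    rw [norm_mul]
    refine mul_le_mul (hp_inv_n ω) ?_ (norm_nonneg _) (le_of_lt (one_div_pos.mpr hε0))
    calc ‖Q ω - m ω ^ 2‖ ≤ ‖Q ω‖ + ‖m ω ^ 2‖ := norm_sub_le _ _
      _ ≤ 1 + 1 := by
          refine add_le_add hq ?_
          rw [norm_pow]
          exact pow_le_one₀ (norm_nonneg _) hω
      _ = 2 := by norm_num
  have intfrac : Integrable (fun ω => ((1 - π (S ω)) / π (S ω)) * (Q ω - m ω ^ 2)) μ := by
    refine intBdd (((measurable_const.sub hpM).div hpM).mul (hQM.sub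
      (hmM.pow_const 2))).aestronglyMeasurable ((1/ε) * 2) ?_
    filter_upwards [hmn, hQn] with ω hω hq
    rw [norm_mul]
    refine mul_le_mul ?_ ?_ (norm_nonneg _) (le_of_lt (one_div_pos.mpr hε0))
    · rw [norm_div, Real.norm_eq_abs (π (S ω)), abs_of_pos (hp_pos ω)]
      refine div_le_div₀ (by norm_num) ?_ hε0 (hp_ge ω)
      rw [Real.norm_eq_abs, abs_le]
      constructor
      · linarith [hp_le1 ω]
      · linarith [hp_pos ω]
    · calc ‖Q ω - m ω ^ 2‖ ≤ ‖Q ω‖ + ‖m ω ^ 2‖ := norm_sub_le _ _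
        _ ≤ 1 + 1 := by
            refine add_le_add hq ?_
            rw [norm_pow]
            exact pow_le_one₀ (norm_nonneg _) hω
        _ = 2 := by norm_num
  have hIZsq : ∫ ω, Z ω ^ 2 ∂μ
      = ∫ ω, ((1 / π (S ω)) * (Q ω - m ω ^ 2) + m ω ^ 2) ∂μ := by
    rw [← integral_condExp (μ := μ) h𝔪le (f := fun ω => Z ω ^ 2)]
    exact integral_congr_ae cZsq
  have hsplit : ∫ ω, ((1 / π (S ω)) * (Q ω - m ω ^ 2) + m ω ^ 2) ∂μ
      = (∫ ω, ((1 - π (S ω)) / π (S ω)) * (Q ω - m ω ^ 2) ∂μ)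
        + ((∫ ω, Q ω ∂μ) - ∫ ω, m ω ^ 2 ∂μ) + ∫ ω, m ω ^ 2 ∂μ := by
    have e : ∀ ω, (1 / π (S ω)) * (Q ω - m ω ^ 2) + m ω ^ 2
        = (((1 - π (S ω)) / π (S ω)) * (Q ω - m ω ^ 2) + (Q ω - m ω ^ 2)) + m ω ^ 2 := by
      intro ω
      have hπ := hp_ne ω
      field_simp
      ring
    rw [integral_congr_ae (Eventually.of_forall fun ω => e ω)]
    have h1 : ∫ ω, ((((1 - π (S ω)) / π (S ω)) * (Q ω - m ω ^ 2) + (Q ω - m ω ^ 2)) + m ω ^ 2) ∂μ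
        = (∫ ω, (((1 - π (S ω)) / π (S ω)) * (Q ω - m ω ^ 2) + (Q ω - m ω ^ 2)) ∂μ)
          + ∫ ω, m ω ^ 2 ∂μ := integral_add (intfrac.add intQm) intmsq
    have h2 : ∫ ω, (((1 - π (S ω)) / π (S ω)) * (Q ω - m ω ^ 2) + (Q ω - m ω ^ 2)) ∂μ
        = (∫ ω, ((1 - π (S ω)) / π (S ω)) * (Q ω - m ω ^ 2) ∂μ) + ∫ ω, (Q ω - m ω ^ 2) ∂μ :=
      integral_add intfrac intQm
    have h3 : ∫ ω, (Q ω - m ω ^ 2) ∂μ = (∫ ω, Q ω ∂μ) - ∫ ω, m ω ^ 2 ∂μ :=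
      integral_sub intQ intmsq
    rw [h1, h2, h3]
  have hQint : ∫ ω, Q ω ∂μ = ∫ ω, B ω ^ 2 ∂μ := by
    rw [hQdef]
    exact integral_condExp h𝔪le
  rw [variance_eq_sub hZL2, variance_eq_sub hBL2]
  simp only [Pi.pow_apply]
  rw [part1, hIZsq, hsplit, hQint]
  ring
end

section
/- Variance reduction from regression adjustment with known nuisances: with $D$ Bernoulli($\pi(S)$) conditional on $(S,X)$, $B\in[0,1]$ conditionally independent of $D$ given $(S,X)$, $m=\mathbb{E}[B\mid S,X]$, the adjusted score $Z_{adj}=\frac{D(B-m)}{\pi(S)}+m$ and unadjusted score $Z_{emp}=\frac{D\,B}{\pi(S)}$ both have mean $\mathbb{E}[B]$, and $\mathrm{Var}(Z_{adj}) \le \mathrm{Var}(Z_{emp})$. -/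
open MeasureTheory ProbabilityTheory
open scoped ENNReal NNReal

lemma aux_int_bdd {Ω : Type*} {mΩ : MeasurableSpace Ω} {μ : Measure Ω} [IsFiniteMeasure μ]
    {f : Ω → ℝ} (C : ℝ) (hf : AEStronglyMeasurable f μ) (h : ∀ᵐ ω ∂μ, ‖f ω‖ ≤ C) :
    Integrable f μ :=
  (integrable_const C).mono' hf h

lemma aux_pull {Ω : Type*} {mΩ : MeasurableSpace Ω} (μ : Measure Ω) [IsProbabilityMeasure μ]
    {𝔪 : MeasurableSpace Ω} (h𝔪le : 𝔪 ≤ mΩ) (g f : Ω → ℝ)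
    (hg : StronglyMeasurable[𝔪] g) (hf : Integrable f μ)
    (hgf : Integrable (fun ω => g ω * f ω) μ) :
    ∫ ω, g ω * f ω ∂μ = ∫ ω, g ω * (μ[f|𝔪]) ω ∂μ := by
  have h1 : μ[g * f|𝔪] =ᵐ[μ] g * μ[f|𝔪] := condExp_mul_of_stronglyMeasurable_left hg hgf hf
  calc ∫ ω, g ω * f ω ∂μ = ∫ ω, (μ[g * f|𝔪]) ω ∂μ := (integral_condExp h𝔪le).symm
    _ = ∫ ω, (g * μ[f|𝔪]) ω ∂μ := integral_congr_ae h1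
    _ = ∫ ω, g ω * (μ[f|𝔪]) ω ∂μ := rfl

lemma aux_indicator_mul {Ω : Type*} (s : Set Ω) (g f : Ω → ℝ) :
    (fun ω => s.indicator g ω * f ω) = s.indicator (fun ω => g ω * f ω) := by
  funext ω
  by_cases hω : ω ∈ s <;> simp [Set.indicator_apply, hω]

lemma aux_pullSet {Ω : Type*} {mΩ : MeasurableSpace Ω} (μ : Measure Ω) [IsProbabilityMeasure μ]
    {𝔪 : MeasurableSpace Ω} (h𝔪le : 𝔪 ≤ mΩ) (g f : Ω → ℝ)
    (hg : StronglyMeasurable[𝔪] g) (hf : Integrable f μ)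
    (hgf : Integrable (fun ω => g ω * f ω) μ)
    {s : Set Ω} (hs : MeasurableSet[𝔪] s) :
    ∫ ω in s, g ω * f ω ∂μ = ∫ ω in s, g ω * (μ[f|𝔪]) ω ∂μ := by
  have hsΩ : MeasurableSet[mΩ] s := h𝔪le s hs
  have hgs : StronglyMeasurable[𝔪] (s.indicator g) := hg.indicator hs
  have hgsf : Integrable (fun ω => s.indicator g ω * f ω) μ := by
    rw [aux_indicator_mul]
    exact Integrable.indicator (μ := μ) hgf hsΩ
  have h := aux_pull μ h𝔪le (s.indicator g) f hgs hf hgsf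
  rw [aux_indicator_mul, aux_indicator_mul,
    @integral_indicator Ω ℝ mΩ _ _ _ _ μ hsΩ, @integral_indicator Ω ℝ mΩ _ _ _ _ μ hsΩ] at h
  exact h

lemma aux_setIntegral_indicator_comm {Ω : Type*} {mΩ : MeasurableSpace Ω} (μ : Measure Ω)
    (f : Ω → ℝ) {s t : Set Ω} (hs : MeasurableSet s) (ht : MeasurableSet t) :
    ∫ ω in t, s.indicator f ω ∂μ = ∫ ω in s, f ω * t.indicator (fun _ => (1:ℝ)) ω ∂μ := by
  rw [← integral_indicator ht, ← integral_indicator hs]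
  congr 1
  funext ω
  by_cases hωs : ω ∈ s <;> by_cases hωt : ω ∈ t <;>
    simp [Set.indicator_apply, hωs, hωt]

lemma aux_measure_compare {Ω : Type*} {mΩ : MeasurableSpace Ω} (μ : Measure Ω)
    [IsProbabilityMeasure μ] (a b B : Ω → ℝ)
    (ha : Measurable a) (hb : Measurable b) (hB : Measurable B)
    (ha01 : ∀ ω, 0 ≤ a ω ∧ a ω ≤ 1) (hb01 : ∀ ω, 0 ≤ b ω ∧ b ω ≤ 1)
    (h : ∀ t : Set ℝ, MeasurableSet t → ∫ ω in B ⁻¹' t, a ω ∂μ = ∫ ω in B ⁻¹' t, b ω ∂μ) :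
    ∫ ω, a ω * B ω ∂μ = ∫ ω, b ω * B ω ∂μ := by
  have hmap : (μ.withDensity (fun ω => ((a ω).toNNReal : ℝ≥0∞))).map B
      = (μ.withDensity (fun ω => ((b ω).toNNReal : ℝ≥0∞))).map B := by
    ext t ht
    rw [Measure.map_apply hB ht, Measure.map_apply hB ht,
      withDensity_apply _ (hB ht), withDensity_apply _ (hB ht)]
    have hint1 : Integrable a (μ.restrict (B ⁻¹' t)) :=
      (aux_int_bdd 1 ha.aestronglyMeasurable
        (Filter.Eventually.of_forall fun ω => by
          rw [Real.norm_eq_abs, abs_of_nonneg (ha01 ω).1]; exact (ha01 ω).2)).integrableOn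
    have hint2 : Integrable b (μ.restrict (B ⁻¹' t)) :=
      (aux_int_bdd 1 hb.aestronglyMeasurable
        (Filter.Eventually.of_forall fun ω => by
          rw [Real.norm_eq_abs, abs_of_nonneg (hb01 ω).1]; exact (hb01 ω).2)).integrableOn
    have e1 : ∀ ω, (((a ω).toNNReal : ℝ≥0∞)) = ENNReal.ofReal (a ω) := fun ω => rfl
    have e2 : ∀ ω, (((b ω).toNNReal : ℝ≥0∞)) = ENNReal.ofReal (b ω) := fun ω => rfl
    simp only [e1, e2]
    rw [← ofReal_integral_eq_lintegral_ofReal hint1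
        (Filter.Eventually.of_forall fun ω => (ha01 ω).1),
      ← ofReal_integral_eq_lintegral_ofReal hint2
        (Filter.Eventually.of_forall fun ω => (hb01 ω).1),
      h t ht]
  have key : ∀ (c : Ω → ℝ), Measurable c → (∀ ω, 0 ≤ c ω ∧ c ω ≤ 1) →
      ∫ ω, c ω * B ω ∂μ
        = ∫ x, x ∂((μ.withDensity (fun ω => ((c ω).toNNReal : ℝ≥0∞))).map B) := by
    intro c hc hc01
    have h1 : ∫ x, x ∂((μ.withDensity (fun ω => ((c ω).toNNReal : ℝ≥0∞))).map B)
        = ∫ ω, B ω ∂(μ.withDensity (fun ω => ((c ω).toNNReal : ℝ≥0∞))) :=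
      integral_map hB.aemeasurable aestronglyMeasurable_id
    have h2 : ∫ ω, B ω ∂(μ.withDensity (fun ω => ((c ω).toNNReal : ℝ≥0∞)))
        = ∫ ω, (c ω).toNNReal • B ω ∂μ :=
      integral_withDensity_eq_integral_smul hc.real_toNNReal B
    rw [h1, h2]
    congr 1
    funext ω
    rw [NNReal.smul_def, Real.coe_toNNReal _ (hc01 ω).1, smul_eq_mul]
  rw [key a ha ha01, key b hb hb01, hmap]

/-- Variance reduction from regression adjustment with known nuisances: the
adjusted score `Z_adj = D(B-m)/π(S) + m` and the unadjusted score `Z_emp = DB/π(S)` both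
have mean `E[B]`, and `Var(Z_adj) ≤ Var(Z_emp)`. -/
theorem regression_adjustment_variance_reduction
    {Ω : Type*} [mΩ : MeasurableSpace Ω] [hSB : StandardBorelSpace Ω] [Nonempty Ω]
    (μ : Measure Ω) [hμ : IsProbabilityMeasure μ]
    {𝒮 : Type*} [Fintype 𝒮] [MeasurableSpace 𝒮] [MeasurableSingletonClass 𝒮]
    {𝒳 : Type*} [MeasurableSpace 𝒳]
    (S : Ω → 𝒮) (X : Ω → 𝒳) (hS : Measurable S) (hX : Measurable X)
    (𝔪 : MeasurableSpace Ω)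
    (h𝔪 : 𝔪 = MeasurableSpace.comap (fun ω => (S ω, X ω)) inferInstance)
    (h𝔪le : 𝔪 ≤ mΩ)
    (D B : Ω → ℝ) (hD : @Measurable Ω ℝ mΩ _ D) (hB : @Measurable Ω ℝ mΩ _ B)
    (hD01 : ∀ ω, D ω = 0 ∨ D ω = 1) (hB01 : ∀ ω, B ω ∈ Set.Icc (0:ℝ) 1)
    (π : 𝒮 → ℝ) (hπ01 : ∀ s, 0 < π s ∧ π s < 1)
    -- D is Bernoulli(π(S)) conditionally on (S, X):
    (hbern : μ[D | 𝔪] =ᵐ[μ] fun ω => π (S ω))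
    -- D and B are conditionally independent given (S, X):
    (hci : @CondIndepFun Ω 𝔪 mΩ hSB h𝔪le ℝ ℝ _ _ D B μ (by infer_instance))
    (m Zadj Zemp : Ω → ℝ)
    (hm : m = μ[B | 𝔪])
    (hZadj : ∀ ω, Zadj ω = D ω * (B ω - m ω) / π (S ω) + m ω)
    (hZemp : ∀ ω, Zemp ω = D ω * B ω / π (S ω)) :
    (∫ ω, Zadj ω ∂μ) = (∫ ω, B ω ∂μ)
      ∧ (∫ ω, Zemp ω ∂μ) = (∫ ω, B ω ∂μ)
      ∧ variance Zadj μ ≤ variance Zemp μ := by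
  classical
  obtain ⟨ω₀⟩ := (inferInstance : Nonempty Ω)
  haveI h𝒮ne : Nonempty 𝒮 := ⟨S ω₀⟩
  set p : Ω → ℝ := fun ω => π (S ω) with hpdef
  set ε : ℝ := Finset.univ.inf' Finset.univ_nonempty π with hεdef
  have hε0 : 0 < ε := by
    rw [hεdef, Finset.lt_inf'_iff]
    exact fun s _ => (hπ01 s).1
  have hεle : ∀ ω, ε ≤ p ω := fun ω => Finset.inf'_le π (Finset.mem_univ (S ω))
  have hple1 : ∀ ω, p ω ≤ 1 := fun ω => (hπ01 (S ω)).2.le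
  have hp0 : ∀ ω, 0 < p ω := fun ω => lt_of_lt_of_le hε0 (hεle ω)
  have hpne : ∀ ω, p ω ≠ 0 := fun ω => (hp0 ω).ne'
  -- measurability
  have hπm : Measurable π := measurable_of_countable π
  have hpM : @Measurable Ω ℝ mΩ _ p := hπm.comp hS
  have hSX𝔪 : @Measurable Ω (𝒮 × 𝒳) 𝔪 _ (fun ω => (S ω, X ω)) := by
    rw [measurable_iff_comap_le]
    exact le_of_eq h𝔪.symm
  have hS𝔪 : @Measurable Ω 𝒮 𝔪 _ S := (measurable_fst.comp hSX𝔪 : _)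
  have hp𝔪 : StronglyMeasurable[𝔪] p := (hπm.comp hS𝔪).stronglyMeasurable
  have hm𝔪 : StronglyMeasurable[𝔪] m := hm ▸ stronglyMeasurable_condExp
  have hmM : @Measurable Ω ℝ mΩ _ m := ((hm𝔪.mono h𝔪le).measurable : _)
  -- bounds
  have hDb : ∀ ω, ‖D ω‖ ≤ 1 := by
    intro ω; rcases hD01 ω with h | h <;> simp [h]
  have hBb : ∀ ω, ‖B ω‖ ≤ 1 := by
    intro ω
    rw [Real.norm_eq_abs, abs_le]
    exact ⟨by linarith [(hB01 ω).1], (hB01 ω).2⟩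
  have hDBb : ∀ ω, ‖D ω * B ω‖ ≤ 1 := by
    intro ω
    rw [norm_mul]
    calc ‖D ω‖ * ‖B ω‖ ≤ 1 * 1 :=
          mul_le_mul (hDb ω) (hBb ω) (norm_nonneg _) zero_le_one
      _ = 1 := by ring
  -- integrability of the basic functions
  have hBint : Integrable B μ := aux_int_bdd 1 hB.aestronglyMeasurable (ae_of_all _ hBb)
  have hDint : Integrable D μ := aux_int_bdd 1 hD.aestronglyMeasurable (ae_of_all _ hDb)
  have hDBint : Integrable (fun ω => D ω * B ω) μ :=
    aux_int_bdd 1 (hD.mul hB).aestronglyMeasurable (ae_of_all _ hDBb)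
  have hm01 : ∀ᵐ ω ∂μ, 0 ≤ m ω ∧ m ω ≤ 1 := by
    have h0 : (0 : Ω → ℝ) ≤ᵐ[μ] μ[B|𝔪] :=
      condExp_nonneg (Filter.Eventually.of_forall fun ω => (hB01 ω).1)
    have h1 : μ[B|𝔪] ≤ᵐ[μ] μ[(fun _ => (1:ℝ))|𝔪] :=
      condExp_mono hBint (integrable_const 1) (ae_of_all _ fun ω => (hB01 ω).2)
    have h2 : μ[(fun _ => (1:ℝ))|𝔪] = fun _ => (1:ℝ) := condExp_const h𝔪le 1
    rw [hm]
    filter_upwards [h0, h1] with ω ha hb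
    refine ⟨ha, ?_⟩
    rw [h2] at hb
    exact hb
  have hpm_b : ∀ᵐ ω ∂μ, ‖p ω * m ω‖ ≤ 1 := by
    filter_upwards [hm01] with ω hω
    rw [norm_mul, Real.norm_eq_abs, Real.norm_eq_abs, abs_of_pos (hp0 ω),
      abs_of_nonneg hω.1]
    calc p ω * m ω ≤ 1 * 1 := mul_le_mul (hple1 ω) hω.2 hω.1 zero_le_one
      _ = 1 := by ring
  have hpb : ∀ ω, ‖p ω‖ ≤ 1 := by
    intro ω
    rw [Real.norm_eq_abs, abs_of_pos (hp0 ω)]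
    exact hple1 ω
  -- integrability of a product with an a.e.-bounded 𝔪-measurable function
  have intmul : ∀ (g f : Ω → ℝ) (C : ℝ), StronglyMeasurable[𝔪] g →
      (∀ᵐ ω ∂μ, ‖g ω‖ ≤ C) → (@Measurable Ω ℝ mΩ _ f) → (∀ᵐ ω ∂μ, ‖f ω‖ ≤ 1) →
      Integrable (fun ω => g ω * f ω) μ := by
    intro g f C hg hgb hf hfb
    refine aux_int_bdd C (((hg.mono h𝔪le).measurable.mul hf).aestronglyMeasurable) ?_
    filter_upwards [hgb, hfb] with ω h1 h2
    rw [norm_mul]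
    calc ‖g ω‖ * ‖f ω‖ ≤ C * 1 :=
          mul_le_mul h1 h2 (norm_nonneg _) (le_trans (norm_nonneg _) h1)
      _ = C := by ring
  -- the key substitution: replace `f` by a version of its conditional expectation
  have key : ∀ (g f f' : Ω → ℝ) (C : ℝ), StronglyMeasurable[𝔪] g →
      (∀ᵐ ω ∂μ, ‖g ω‖ ≤ C) → (@Measurable Ω ℝ mΩ _ f) → (∀ ω, ‖f ω‖ ≤ 1) →
      (μ[f|𝔪] =ᵐ[μ] f') →
      ∫ ω, g ω * f ω ∂μ = ∫ ω, g ω * f' ω ∂μ := by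
    intro g f f' C hg hgb hf hfb hff'
    have hfint : Integrable f μ := aux_int_bdd 1 hf.aestronglyMeasurable (ae_of_all _ hfb)
    have hgf : Integrable (fun ω => g ω * f ω) μ :=
      intmul g f C hg hgb hf (ae_of_all _ hfb)
    rw [aux_pull μ h𝔪le g f hg hfint hgf]
    apply integral_congr_ae
    filter_upwards [hff'] with ω hω
    rw [hω]
  have hmb1 : ∀ᵐ ω ∂μ, ‖m ω‖ ≤ 1 := by
    filter_upwards [hm01] with ω h
    rw [Real.norm_eq_abs, abs_le]
    exact ⟨by linarith [h.1], h.2⟩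
  have mul1 : ∀ (f g : Ω → ℝ), (∀ ω, ‖f ω‖ ≤ 1) → (∀ ω, ‖g ω‖ ≤ 1) →
      ∀ ω, ‖f ω * g ω‖ ≤ 1 := by
    intro f g h1 h2 ω
    rw [norm_mul]
    calc ‖f ω‖ * ‖g ω‖ ≤ 1 * 1 := mul_le_mul (h1 ω) (h2 ω) (norm_nonneg _) zero_le_one
      _ = 1 := by ring
  have hχb : ∀ (t : Set ℝ) (ω : Ω), ‖(B ⁻¹' t).indicator (fun _ => (1:ℝ)) ω‖ ≤ 1 := by
    intro t ω
    by_cases h : ω ∈ B ⁻¹' t <;> simp [Set.indicator_apply, h]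
  -- conditional independence consequence
  have hDχ : ∀ (t : Set ℝ), MeasurableSet t →
      μ[fun ω => D ω * (B ⁻¹' t).indicator (fun _ => (1:ℝ)) ω|𝔪]
        =ᵐ[μ] fun ω => p ω * (μ[(B ⁻¹' t).indicator (fun _ => (1:ℝ))|𝔪]) ω := by
    intro t ht
    have h := (condIndepFun_iff_condExp_inter_preimage_eq_mul hD hB).mp hci {1} t
      (measurableSet_singleton 1) ht
    have e1 : (D ⁻¹' {1} ∩ B ⁻¹' t).indicator (fun _ => (1:ℝ))
        = fun ω => D ω * (B ⁻¹' t).indicator (fun _ => (1:ℝ)) ω := by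
      funext ω
      rcases hD01 ω with h0 | h1
      · have hni : ω ∉ D ⁻¹' ({1} : Set ℝ) := by simp [Set.mem_preimage, h0]
        by_cases hbt : ω ∈ B ⁻¹' t <;>
          simp [Set.indicator_apply, Set.mem_inter_iff, hni, h0, hbt]
      · by_cases hbt : ω ∈ B ⁻¹' t <;>
          simp [Set.indicator_apply, Set.mem_inter_iff, Set.mem_preimage, h1, hbt]
    have e2 : (D ⁻¹' ({1} : Set ℝ)).indicator (fun _ => (1:ℝ)) = D := by
      funext ω
      rcases hD01 ω with h0 | h1
      · simp [Set.indicator_apply, Set.mem_preimage, h0]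
      · simp [Set.indicator_apply, Set.mem_preimage, h1]
    rw [e1, e2] at h
    refine h.trans ?_
    filter_upwards [hbern] with ω hω
    rw [hω]
  -- the two-sets integral identity coming from conditional independence
  have hstar : ∀ (s : Set Ω), MeasurableSet[𝔪] s → ∀ (t : Set ℝ), MeasurableSet t →
      ∫ ω in B ⁻¹' t, s.indicator D ω ∂μ = ∫ ω in B ⁻¹' t, s.indicator p ω ∂μ := by
    intro s hs t ht
    have hsΩ : MeasurableSet[mΩ] s := h𝔪le s hs
    set χ : Ω → ℝ := (B ⁻¹' t).indicator (fun _ => (1:ℝ)) with hχdef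
    have hχm : @Measurable Ω ℝ mΩ _ χ := measurable_const.indicator (hB ht)
    have hχint : Integrable χ μ :=
      aux_int_bdd 1 hχm.aestronglyMeasurable (ae_of_all _ (hχb t))
    have hDχint : Integrable (fun ω => D ω * χ ω) μ :=
      aux_int_bdd 1 (hD.mul hχm).aestronglyMeasurable (ae_of_all _ (mul1 D χ hDb (hχb t)))
    have hpχint : Integrable (fun ω => p ω * χ ω) μ :=
      intmul p χ 1 hp𝔪 (ae_of_all _ hpb) hχm (ae_of_all _ (hχb t))
    rw [aux_setIntegral_indicator_comm μ D hsΩ (hB ht),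
      aux_setIntegral_indicator_comm μ p hsΩ (hB ht)]
    calc ∫ ω in s, D ω * χ ω ∂μ
        = ∫ ω in s, (μ[fun ω => D ω * χ ω|𝔪]) ω ∂μ :=
          (setIntegral_condExp h𝔪le hDχint hs).symm
      _ = ∫ ω in s, p ω * (μ[χ|𝔪]) ω ∂μ :=
          @setIntegral_congr_ae Ω ℝ mΩ _ _ _ _ s μ hsΩ ((hDχ t ht).mono fun ω h _ => h)
      _ = ∫ ω in s, p ω * χ ω ∂μ := (aux_pullSet μ h𝔪le p χ hp𝔪 hχint hpχint hs).symm
  -- set-integral identification of E[DB|𝔪]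
  have hsDB : ∀ (s : Set Ω), MeasurableSet[𝔪] s →
      ∫ ω in s, p ω * m ω ∂μ = ∫ ω in s, D ω * B ω ∂μ := by
    intro s hs
    have hsΩ : MeasurableSet[mΩ] s := h𝔪le s hs
    have hpBint : Integrable (fun ω => p ω * B ω) μ :=
      intmul p B 1 hp𝔪 (ae_of_all _ hpb) hB (ae_of_all _ hBb)
    have h1 : ∫ ω in s, p ω * B ω ∂μ = ∫ ω in s, p ω * m ω ∂μ := by
      have h := aux_pullSet μ h𝔪le p B hp𝔪 hBint hpBint hs
      rw [hm]
      exact h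
    have h2 : ∫ ω, s.indicator D ω * B ω ∂μ = ∫ ω, s.indicator p ω * B ω ∂μ := by
      refine aux_measure_compare μ _ _ B (hD.indicator hsΩ) (hpM.indicator hsΩ) hB ?_ ?_
        (hstar s hs)
      · intro ω
        by_cases hω : ω ∈ s
        · simp only [Set.indicator_of_mem hω]
          rcases hD01 ω with h | h <;> simp [h]
        · simp [Set.indicator_of_notMem hω]
      · intro ω
        by_cases hω : ω ∈ s
        · simp only [Set.indicator_of_mem hω]
          exact ⟨(hp0 ω).le, hple1 ω⟩
        · simp [Set.indicator_of_notMem hω]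
    rw [aux_indicator_mul, aux_indicator_mul,
      @integral_indicator Ω ℝ mΩ _ _ _ _ μ hsΩ, @integral_indicator Ω ℝ mΩ _ _ _ _ μ hsΩ] at h2
    exact h1.symm.trans h2.symm
  -- Step 1: conditional expectation of D * B
  have hDBm : (fun ω => p ω * m ω) =ᵐ[μ] μ[fun ω => D ω * B ω|𝔪] := by
    refine ae_eq_condExp_of_forall_setIntegral_eq h𝔪le hDBint
      (fun s hs _ => Integrable.integrableOn (s := s) (μ := μ)
        (intmul p m 1 hp𝔪 (ae_of_all _ hpb) hmM hmb1))
      (fun s hs _ => hsDB s hs) ?_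
    exact StronglyMeasurable.aestronglyMeasurable (hp𝔪.mul hm𝔪)
  -- measurability of the scores
  have hZadjM : @Measurable Ω ℝ mΩ _ Zadj := by
    have : Zadj = fun ω => D ω * (B ω - m ω) / p ω + m ω := funext hZadj
    rw [this]
    exact ((hD.mul (hB.sub hmM)).div hpM).add hmM
  have hZempM : @Measurable Ω ℝ mΩ _ Zemp := by
    have : Zemp = fun ω => D ω * B ω / p ω := funext hZemp
    rw [this]
    exact (hD.mul hB).div hpM
  -- 𝔪-measurability of coefficient functions
  have hmp𝔪 : @Measurable Ω ℝ 𝔪 _ p := hπm.comp hS𝔪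
  have hmm𝔪 : @Measurable Ω ℝ 𝔪 _ m := hm𝔪.measurable
  set g1 : Ω → ℝ := fun ω => (p ω)⁻¹ with hg1def
  set g2 : Ω → ℝ := fun ω => -(m ω / p ω) with hg2def
  set g3 : Ω → ℝ := fun ω => m ω / p ω ^ 2 - m ω / p ω with hg3def
  set g4 : Ω → ℝ := fun ω => -(m ω ^ 2 / p ω ^ 2) + 2 * (m ω ^ 2 / p ω) with hg4def
  have hg1𝔪 : StronglyMeasurable[𝔪] g1 := hmp𝔪.inv.stronglyMeasurable
  have hg2𝔪 : StronglyMeasurable[𝔪] g2 := ((hmm𝔪.div hmp𝔪).neg).stronglyMeasurable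
  have hg3𝔪 : StronglyMeasurable[𝔪] g3 :=
    ((hmm𝔪.div (hmp𝔪.pow_const 2)).sub (hmm𝔪.div hmp𝔪)).stronglyMeasurable
  have hg4𝔪 : StronglyMeasurable[𝔪] g4 :=
    ((((hmm𝔪.pow_const 2).div (hmp𝔪.pow_const 2)).neg).add
      (((hmm𝔪.pow_const 2).div hmp𝔪).const_mul 2)).stronglyMeasurable
  -- bounds on coefficient functions
  have hdivb : ∀ᵐ ω ∂μ, 0 ≤ m ω / p ω ∧ m ω / p ω ≤ 1/ε ∧
      0 ≤ m ω / p ω ^ 2 ∧ m ω / p ω ^ 2 ≤ 1/ε^2 ∧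
      0 ≤ m ω ^ 2 / p ω ∧ m ω ^ 2 / p ω ≤ 1/ε ∧
      0 ≤ m ω ^ 2 / p ω ^ 2 ∧ m ω ^ 2 / p ω ^ 2 ≤ 1/ε^2 := by
    filter_upwards [hm01] with ω h
    obtain ⟨h0, h1⟩ := h
    have hpω : 0 < p ω := hp0 ω
    have hεp : ε ≤ p ω := hεle ω
    have hsq : m ω ^ 2 ≤ 1 := by nlinarith
    have hsq0 : 0 ≤ m ω ^ 2 := sq_nonneg _
    have hp2 : ε ^ 2 ≤ p ω ^ 2 := by nlinarith
    have hp2pos : 0 < p ω ^ 2 := by positivity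
    have hε2pos : 0 < ε ^ 2 := by positivity
    refine ⟨div_nonneg h0 hpω.le, div_le_div₀ zero_le_one h1 hε0 hεp,
      div_nonneg h0 hp2pos.le, div_le_div₀ zero_le_one h1 hε2pos hp2,
      div_nonneg hsq0 hpω.le, div_le_div₀ zero_le_one hsq hε0 hεp,
      div_nonneg hsq0 hp2pos.le, div_le_div₀ zero_le_one hsq hε2pos hp2⟩
  have hg1b : ∀ᵐ ω ∂μ, ‖g1 ω‖ ≤ 1/ε := by
    refine ae_of_all _ fun ω => ?_
    rw [hg1def, Real.norm_eq_abs, abs_of_pos (inv_pos.mpr (hp0 ω)), ← one_div]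
    exact div_le_div₀ zero_le_one le_rfl hε0 (hεle ω)
  have hg2b : ∀ᵐ ω ∂μ, ‖g2 ω‖ ≤ 1/ε := by
    filter_upwards [hdivb] with ω h
    rw [hg2def, Real.norm_eq_abs, abs_neg, abs_le]
    exact ⟨by linarith [h.1, h.2.1], by linarith [h.1, h.2.1]⟩
  have hg3b : ∀ᵐ ω ∂μ, ‖g3 ω‖ ≤ 1/ε^2 + 1/ε := by
    filter_upwards [hdivb] with ω h
    obtain ⟨a0, a1, b0, b1, -⟩ := h
    rw [hg3def, Real.norm_eq_abs, abs_le]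
    exact ⟨by linarith, by linarith⟩
  have hg4b : ∀ᵐ ω ∂μ, ‖g4 ω‖ ≤ 1/ε^2 + 2 * (1/ε) := by
    filter_upwards [hdivb] with ω h
    obtain ⟨-, -, -, -, c0, c1, d0, d1⟩ := h
    rw [hg4def, Real.norm_eq_abs, abs_le]
    exact ⟨by linarith, by linarith⟩
  -- the master rewriting step
  have split3 : ∀ (u v w : Ω → ℝ) (C₁ C₂ C₃ : ℝ),
      StronglyMeasurable[𝔪] u → (∀ᵐ ω ∂μ, ‖u ω‖ ≤ C₁) →
      StronglyMeasurable[𝔪] v → (∀ᵐ ω ∂μ, ‖v ω‖ ≤ C₂) →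
      (@Measurable Ω ℝ mΩ _ w) → (∀ᵐ ω ∂μ, ‖w ω‖ ≤ C₃) →
      ∫ ω, (u ω * (D ω * B ω) + v ω * D ω + w ω) ∂μ
        = ∫ ω, (u ω * (p ω * m ω) + v ω * p ω + w ω) ∂μ := by
    intro u v w C₁ C₂ C₃ h1 h1b h2 h2b h3 h3b
    have i1 : Integrable (fun ω => u ω * (D ω * B ω)) μ :=
      intmul _ _ C₁ h1 h1b (hD.mul hB) (ae_of_all _ hDBb)
    have i2 : Integrable (fun ω => v ω * D ω) μ := intmul _ _ C₂ h2 h2b hD (ae_of_all _ hDb)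
    have i3 : Integrable w μ := aux_int_bdd C₃ h3.aestronglyMeasurable h3b
    have i1' : Integrable (fun ω => u ω * (p ω * m ω)) μ :=
      intmul _ _ C₁ h1 h1b (hpM.mul hmM) hpm_b
    have i2' : Integrable (fun ω => v ω * p ω) μ := intmul _ _ C₂ h2 h2b hpM (ae_of_all _ hpb)
    have e1 : ∫ ω, u ω * (D ω * B ω) ∂μ = ∫ ω, u ω * (p ω * m ω) ∂μ :=
      key u _ _ C₁ h1 h1b (hD.mul hB) hDBb hDBm.symm
    have e2 : ∫ ω, v ω * D ω ∂μ = ∫ ω, v ω * p ω ∂μ :=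
      key v D p C₂ h2 h2b hD hDb hbern
    have i12 : Integrable (fun ω => u ω * (D ω * B ω) + v ω * D ω) μ := i1.add i2
    have i12' : Integrable (fun ω => u ω * (p ω * m ω) + v ω * p ω) μ := i1'.add i2'
    rw [integral_add i12 i3, integral_add i1 i2, integral_add i12' i3,
      integral_add i1' i2', e1, e2]
  have hintm_eq : ∫ ω, m ω ∂μ = ∫ ω, B ω ∂μ := by
    rw [hm]
    exact integral_condExp h𝔪le
  -- mean of Zadj
  have hZadj_eq : ∫ ω, Zadj ω ∂μ = ∫ ω, B ω ∂μ := by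
    have hdecomp : ∀ ω, Zadj ω = g1 ω * (D ω * B ω) + g2 ω * D ω + m ω := by
      intro ω
      rw [hZadj ω, hg1def, hg2def]
      have := hpne ω; simp only [hpdef] at this ⊢
      field_simp
      try ring
    calc ∫ ω, Zadj ω ∂μ = ∫ ω, (g1 ω * (D ω * B ω) + g2 ω * D ω + m ω) ∂μ :=
          integral_congr_ae (ae_of_all _ hdecomp)
      _ = ∫ ω, (g1 ω * (p ω * m ω) + g2 ω * p ω + m ω) ∂μ :=
          split3 g1 g2 m (1/ε) (1/ε) 1 hg1𝔪 hg1b hg2𝔪 hg2b hmM hmb1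
      _ = ∫ ω, m ω ∂μ := by
          refine integral_congr_ae (ae_of_all _ fun ω => ?_)
          rw [hg1def, hg2def]
          have := hpne ω; simp only [hpdef] at this ⊢
          field_simp
          ring
      _ = ∫ ω, B ω ∂μ := hintm_eq
  -- mean of Zemp
  have hZemp_eq : ∫ ω, Zemp ω ∂μ = ∫ ω, B ω ∂μ := by
    have hdecomp : ∀ ω, Zemp ω = g1 ω * (D ω * B ω) + (fun _ => (0:ℝ)) ω * D ω
        + (fun _ => (0:ℝ)) ω := by
      intro ω
      rw [hZemp ω, hg1def]
      have := hpne ω; simp only [hpdef] at this ⊢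
      field_simp
      try ring
    calc ∫ ω, Zemp ω ∂μ
        = ∫ ω, (g1 ω * (D ω * B ω) + (fun _ => (0:ℝ)) ω * D ω + (fun _ => (0:ℝ)) ω) ∂μ :=
          integral_congr_ae (ae_of_all _ hdecomp)
      _ = ∫ ω, (g1 ω * (p ω * m ω) + (fun _ => (0:ℝ)) ω * p ω + (fun _ => (0:ℝ)) ω) ∂μ :=
          split3 g1 _ _ (1/ε) 0 0 hg1𝔪 hg1b stronglyMeasurable_const
            (ae_of_all _ fun ω => by simp) measurable_const (ae_of_all _ fun ω => by simp)
      _ = ∫ ω, m ω ∂μ := by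
          refine integral_congr_ae (ae_of_all _ fun ω => ?_)
          rw [hg1def]
          have := hpne ω; simp only [hpdef] at this ⊢
          field_simp
          ring
      _ = ∫ ω, B ω ∂μ := hintm_eq
  -- the cross term vanishes
  have hZW : ∫ ω, Zadj ω * (Zemp ω - Zadj ω) ∂μ = 0 := by
    have hdecomp : ∀ ω, Zadj ω * (Zemp ω - Zadj ω)
        = g3 ω * (D ω * B ω) + g4 ω * D ω + (fun ω => -(m ω ^ 2)) ω := by
      intro ω
      have hpω := hpne ω
      rcases hD01 ω with h | h <;>
        (rw [hZadj ω, hZemp ω, hg3def, hg4def, h]; simp only [hpdef] at hpω ⊢; field_simp; try ring)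
    have hnegm2 : ∀ᵐ ω ∂μ, ‖-(m ω ^ 2)‖ ≤ 1 := by
      filter_upwards [hmb1] with ω h
      rw [norm_neg, norm_pow]
      nlinarith [norm_nonneg (m ω)]
    calc ∫ ω, Zadj ω * (Zemp ω - Zadj ω) ∂μ
        = ∫ ω, (g3 ω * (D ω * B ω) + g4 ω * D ω + (fun ω => -(m ω ^ 2)) ω) ∂μ :=
          integral_congr_ae (ae_of_all _ hdecomp)
      _ = ∫ ω, (g3 ω * (p ω * m ω) + g4 ω * p ω + (fun ω => -(m ω ^ 2)) ω) ∂μ :=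
          split3 g3 g4 _ (1/ε^2 + 1/ε) (1/ε^2 + 2 * (1/ε)) 1 hg3𝔪 hg3b hg4𝔪 hg4b
            ((hmM.pow_const 2).neg) hnegm2
      _ = ∫ ω, (0:ℝ) ∂μ := by
          refine integral_congr_ae (ae_of_all _ fun ω => ?_)
          rw [hg3def, hg4def]
          have := hpne ω; simp only [hpdef] at this ⊢
          field_simp
          ring
      _ = 0 := integral_zero _ _
  -- pointwise bounds on the scores
  have hZempb : ∀ ω, ‖Zemp ω‖ ≤ 1/ε := by
    intro ω
    rw [hZemp ω, Real.norm_eq_abs, abs_div, abs_of_pos (hp0 ω)]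
    refine div_le_div₀ zero_le_one ?_ hε0 (hεle ω)
    have := hDBb ω
    rwa [Real.norm_eq_abs] at this
  have hZadjb : ∀ᵐ ω ∂μ, ‖Zadj ω‖ ≤ 2 * (1/ε) + 1 := by
    filter_upwards [hm01] with ω h
    rw [hZadj ω, Real.norm_eq_abs]
    have h1 : |D ω * (B ω - m ω) / p ω| ≤ 2 * (1/ε) := by
      rw [abs_div, abs_of_pos (hp0 ω), abs_mul]
      have hBm : |B ω - m ω| ≤ 2 := by
        rw [abs_le]
        constructor
        · have := (hB01 ω).1
          linarith [h.2]
        · have := (hB01 ω).2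
          linarith [h.1]
      have hDa : |D ω| ≤ 1 := by
        have := hDb ω
        rwa [Real.norm_eq_abs] at this
      calc |D ω| * |B ω - m ω| / p ω ≤ 1 * 2 / ε :=
            div_le_div₀ (by norm_num)
              (mul_le_mul hDa hBm (abs_nonneg _) zero_le_one) hε0 (hεle ω)
        _ = 2 * (1/ε) := by ring
    have h2 : |m ω| ≤ 1 := by
      rw [abs_le]
      exact ⟨by linarith [h.1], h.2⟩
    calc |D ω * (B ω - m ω) / p ω + m ω|
        ≤ |D ω * (B ω - m ω) / p ω| + |m ω| := abs_add_le _ _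
      _ ≤ 2 * (1/ε) + 1 := by linarith
  have hmem2adj : MemLp Zadj 2 μ :=
    MemLp.of_bound hZadjM.aestronglyMeasurable _ hZadjb
  have hmem2emp : MemLp Zemp 2 μ :=
    MemLp.of_bound hZempM.aestronglyMeasurable _ (ae_of_all _ hZempb)
  have hvadj : variance Zadj μ = ∫ ω, Zadj ω ^ 2 ∂μ - (∫ ω, Zadj ω ∂μ) ^ 2 := by
    rw [variance_eq_sub hmem2adj]
    simp only [Pi.pow_apply]
  have hvemp : variance Zemp μ = ∫ ω, Zemp ω ^ 2 ∂μ - (∫ ω, Zemp ω ∂μ) ^ 2 := by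
    rw [variance_eq_sub hmem2emp]
    simp only [Pi.pow_apply]
  have iZadj2 : Integrable (fun ω => Zadj ω ^ 2) μ := by
    refine aux_int_bdd ((2*(1/ε)+1)^2) ((hZadjM.pow_const 2).aestronglyMeasurable) ?_
    filter_upwards [hZadjb] with ω h
    rw [norm_pow]
    exact pow_le_pow_left₀ (norm_nonneg _) h 2
  have hWb : ∀ᵐ ω ∂μ, ‖Zemp ω - Zadj ω‖ ≤ 1/ε + (2*(1/ε)+1) := by
    filter_upwards [hZadjb] with ω h
    refine le_trans (norm_sub_le _ _) ?_
    have := hZempb ω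
    linarith
  have iZW : Integrable (fun ω => 2 * (Zadj ω * (Zemp ω - Zadj ω))) μ := by
    refine aux_int_bdd (2 * ((2*(1/ε)+1) * (1/ε + (2*(1/ε)+1))))
      (((hZadjM.mul (hZempM.sub hZadjM)).const_mul 2).aestronglyMeasurable) ?_
    filter_upwards [hZadjb, hWb] with ω h hW
    rw [norm_mul, norm_mul]
    have h2 : ‖(2:ℝ)‖ = 2 := by norm_num
    rw [h2]
    have hZ0 : (0:ℝ) ≤ ‖Zadj ω‖ := norm_nonneg _
    have hmul := mul_le_mul h hW (norm_nonneg _) (by positivity)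
    linarith
  have iW2 : Integrable (fun ω => (Zemp ω - Zadj ω) ^ 2) μ := by
    refine aux_int_bdd ((1/ε + (2*(1/ε)+1))^2)
      (((hZempM.sub hZadjM).pow_const 2).aestronglyMeasurable) ?_
    filter_upwards [hWb] with ω hW
    rw [norm_pow]
    exact pow_le_pow_left₀ (norm_nonneg _) hW 2
  have hsq : ∫ ω, Zemp ω ^ 2 ∂μ
      = ∫ ω, Zadj ω ^ 2 ∂μ + ∫ ω, (Zemp ω - Zadj ω) ^ 2 ∂μ := by
    have e : ∀ ω, Zemp ω ^ 2
        = Zadj ω ^ 2 + (2 * (Zadj ω * (Zemp ω - Zadj ω)) + (Zemp ω - Zadj ω) ^ 2) :=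
      fun ω => by ring
    have i23 : Integrable
        (fun ω => 2 * (Zadj ω * (Zemp ω - Zadj ω)) + (Zemp ω - Zadj ω) ^ 2) μ := iZW.add iW2
    rw [integral_congr_ae (ae_of_all _ e), integral_add iZadj2 i23, integral_add iZW iW2]
    have hz : ∫ ω, 2 * (Zadj ω * (Zemp ω - Zadj ω)) ∂μ = 0 := by
      rw [integral_const_mul, hZW, mul_zero]
    rw [hz]
    ring
  refine ⟨hZadj_eq, hZemp_eq, ?_⟩
  rw [hvadj, hvemp, hZadj_eq, hZemp_eq, hsq]
  have hnn : 0 ≤ ∫ ω, (Zemp ω - Zadj ω) ^ 2 ∂μ :=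
    integral_nonneg fun ω => sq_nonneg _
  linarith
end
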